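/- arXiv:1307.4949 — 4 statements merged into one kernel-verified Lean document; each statement's English description precedes it below -/
import Mathlib

section
/- Let n ≥ 1, 1 < p < ∞, and let a : (0,∞) → [0,∞) be almost increasing such that a(t)/t^λ is almost decreasing for some 0 < λ < n/p and ∫₀^1 a(t)/t dt < ∞. Then there exists a constant C > 0 such that for every measurable f : ℝⁿ → [0,∞), every x ∈ ℝⁿ and every r > 0, ∫_{B(x,r)} a(|x−y|) · |x−y|^{−n} · f(y) dy ≤ C · ( ∫₀^r a(t)/t dt ) · Mf(x), where Mf(x) = sup_{ρ>0} (1/|B(x,ρ)|) ∫_{B(x,ρ)} f(y) dy is the Hardy–Littlewood maximal function and |B(x,ρ)| denotes Lebesgue measure of the ball. -/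
open MeasureTheory Set
open scoped ENNReal

/-- The (centered) Hardy–Littlewood maximal function of a non-negative function on `ℝⁿ`. -/
noncomputable def maximalFn (n : ℕ) (f : EuclideanSpace ℝ (Fin n) → ℝ≥0∞)
    (x : EuclideanSpace ℝ (Fin n)) : ℝ≥0∞ :=
  ⨆ (ρ : ℝ) (_ : 0 < ρ), (volume (Metric.ball x ρ))⁻¹ * ∫⁻ y in Metric.ball x ρ, f y

/-- Hedberg-type estimate for the local part of a generalized potential: the integral of
`a(|x-y|)|x-y|^{-n} f(y)` over `B(x,r)` is bounded by `C (∫₀^r a(t)/t dt) Mf(x)`. -/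
theorem local_part_le_maximal
    (n : ℕ) (hn : 1 ≤ n) (p : ℝ) (hp : 1 < p)
    (a : ℝ → ℝ) (ha : ∀ t : ℝ, 0 < t → 0 ≤ a t)
    (hinc : ∃ C > (0 : ℝ), ∀ t₁ t₂ : ℝ, 0 < t₁ → t₁ < t₂ → a t₁ ≤ C * a t₂)
    (lam : ℝ) (hlam0 : 0 < lam) (hlamnp : lam < n / p)
    (hdec : ∃ C > (0 : ℝ), ∀ t₁ t₂ : ℝ, 0 < t₁ → t₁ < t₂ →
      a t₂ / t₂ ^ lam ≤ C * (a t₁ / t₁ ^ lam))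
    (hfin : (∫⁻ t in Ioc (0 : ℝ) 1, ENNReal.ofReal (a t / t)) < ⊤) :
    ∃ C > (0 : ℝ), ∀ f : EuclideanSpace ℝ (Fin n) → ℝ≥0∞, Measurable f →
      ∀ (x : EuclideanSpace ℝ (Fin n)) (r : ℝ), 0 < r →
        (∫⁻ y in Metric.ball x r,
            ENNReal.ofReal (a (dist x y) * dist x y ^ (-(n : ℝ))) * f y) ≤
          ENNReal.ofReal C * (∫⁻ t in Ioc (0 : ℝ) r, ENNReal.ofReal (a t / t)) *
            maximalFn n f x := by
  classical
  obtain ⟨C₁, hC₁, hinc⟩ := hinc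
  obtain ⟨C₂, hC₂, hdec⟩ := hdec
  haveI : NeZero n := ⟨by omega⟩
  haveI : Nontrivial (EuclideanSpace ℝ (Fin n)) := inferInstance
  set V : ℝ≥0∞ := volume (Metric.ball (0 : EuclideanSpace ℝ (Fin n)) 1) with hVdef
  have hV0 : V ≠ 0 := (Metric.measure_ball_pos volume _ one_pos).ne'
  have hVt : V ≠ ⊤ := measure_ball_lt_top.ne
  set K : ℝ := max 1 (C₂ * 2 ^ lam) with hKdef
  have hK1 : (1 : ℝ) ≤ K := le_max_left _ _
  have hK0 : (0 : ℝ) < K := lt_of_lt_of_le one_pos hK1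
  -- comparison of `a` at points within a factor 2
  have hcomp : ∀ δ t : ℝ, 0 < δ → δ ≤ t → t ≤ 2 * δ → a t ≤ K * a δ := by
    intro δ t hδ h1 h2
    rcases eq_or_lt_of_le h1 with rfl | hlt
    · exact le_mul_of_one_le_left (ha _ hδ) hK1
    · have ht0 : 0 < t := hδ.trans hlt
      have htpow : (0 : ℝ) < t ^ lam := Real.rpow_pos_of_pos ht0 _
      have hδpow : (0 : ℝ) < δ ^ lam := Real.rpow_pos_of_pos hδ _
      have hd := hdec δ t hδ hlt
      have htle : t ^ lam ≤ 2 ^ lam * δ ^ lam := by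
        rw [← Real.mul_rpow (by norm_num) hδ.le]
        exact Real.rpow_le_rpow ht0.le h2 hlam0.le
      have hnn : (0 : ℝ) ≤ C₂ * (a δ / δ ^ lam) :=
        mul_nonneg hC₂.le (div_nonneg (ha _ hδ) hδpow.le)
      calc a t = a t / t ^ lam * t ^ lam := (div_mul_cancel₀ _ htpow.ne').symm
        _ ≤ C₂ * (a δ / δ ^ lam) * t ^ lam :=
            mul_le_mul_of_nonneg_right hd htpow.le
        _ ≤ C₂ * (a δ / δ ^ lam) * (2 ^ lam * δ ^ lam) :=
            mul_le_mul_of_nonneg_left htle hnn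
        _ = C₂ * 2 ^ lam * a δ := by
            have hc : a δ / δ ^ lam * δ ^ lam = a δ := div_mul_cancel₀ _ hδpow.ne'
            linear_combination (C₂ * 2 ^ lam) * hc
        _ ≤ K * a δ := mul_le_mul_of_nonneg_right (le_max_right _ _) (ha _ hδ)
  -- lower bound for the dyadic piece of the integral of a(t)/t
  have hlow : ∀ δ : ℝ, 0 < δ →
      ENNReal.ofReal (a δ) ≤ ENNReal.ofReal (2 * C₁) *
        ∫⁻ t in Ioc δ (2 * δ), ENNReal.ofReal (a t / t) := by
    intro δ hδ
    have hpt : ∀ t ∈ Ioc δ (2 * δ),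
        (ENNReal.ofReal (a δ / (2 * C₁ * δ)) : ℝ≥0∞) ≤ ENNReal.ofReal (a t / t) := by
      intro t ht
      have ht0 : 0 < t := hδ.trans ht.1
      apply ENNReal.ofReal_le_ofReal
      rw [div_le_div_iff₀ (by positivity) ht0]
      have h1 : a δ ≤ C₁ * a t := hinc δ t hδ ht.1
      nlinarith [ha t ht0, ha δ hδ, ht.2, mul_le_mul_of_nonneg_right h1 ht0.le,
        mul_le_mul_of_nonneg_left ht.2 (mul_nonneg hC₁.le (ha t ht0))]
    have hIoc : volume (Ioc δ (2 * δ)) = ENNReal.ofReal δ := by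
      rw [Real.volume_Ioc]; congr 1; ring
    have h2 : ENNReal.ofReal (a δ / (2 * C₁ * δ)) * volume (Ioc δ (2 * δ)) ≤
        ∫⁻ t in Ioc δ (2 * δ), ENNReal.ofReal (a t / t) := by
      rw [← setLIntegral_const]
      exact setLIntegral_mono' measurableSet_Ioc hpt
    have h3 : ENNReal.ofReal (a δ) =
        ENNReal.ofReal (2 * C₁) * (ENNReal.ofReal (a δ / (2 * C₁ * δ)) * volume (Ioc δ (2 * δ))) := by
      have hd0 : (0 : ℝ) < 2 * C₁ * δ := by positivity
      have hnn1 : (0 : ℝ) ≤ a δ / (2 * C₁ * δ) := div_nonneg (ha _ hδ) hd0.le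
      rw [hIoc, ← ENNReal.ofReal_mul hnn1, ← ENNReal.ofReal_mul (by positivity)]
      congr 1
      have hc2 : a δ / (2 * C₁ * δ) * (2 * C₁ * δ) = a δ := div_mul_cancel₀ _ hd0.ne'
      linear_combination -hc2
    rw [h3]
    exact mul_le_mul_right h2 _
  -- integral over ball bounded via maximal function
  have hmax : ∀ (f : EuclideanSpace ℝ (Fin n) → ℝ≥0∞) (x : EuclideanSpace ℝ (Fin n)) (ρ : ℝ),
      0 < ρ → (∫⁻ y in Metric.ball x ρ, f y) ≤ volume (Metric.ball x ρ) * maximalFn n f x := by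
    intro f x ρ hρ
    have h0 : volume (Metric.ball x ρ) ≠ 0 := (Metric.measure_ball_pos volume x hρ).ne'
    have ht : volume (Metric.ball x ρ) ≠ ⊤ := measure_ball_lt_top.ne
    have hle : (volume (Metric.ball x ρ))⁻¹ * ∫⁻ y in Metric.ball x ρ, f y ≤ maximalFn n f x :=
      le_iSup₂ (f := fun (ρ : ℝ) (_ : 0 < ρ) =>
        (volume (Metric.ball x ρ))⁻¹ * ∫⁻ y in Metric.ball x ρ, f y) ρ hρ
    calc (∫⁻ y in Metric.ball x ρ, f y)
        = volume (Metric.ball x ρ) * ((volume (Metric.ball x ρ))⁻¹ *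
            ∫⁻ y in Metric.ball x ρ, f y) := by
          rw [← mul_assoc, ENNReal.mul_inv_cancel h0 ht, one_mul]
      _ ≤ volume (Metric.ball x ρ) * maximalFn n f x := mul_le_mul_right hle _
  have hVtoReal : (0 : ℝ) < V.toReal := ENNReal.toReal_pos hV0 hVt
  have hKn : (0 : ℝ) < K * 2 ^ n * (2 * C₁) :=
    mul_pos (mul_pos hK0 (by positivity)) (by positivity)
  refine ⟨K * 2 ^ n * (2 * C₁) * V.toReal, mul_pos hKn hVtoReal, ?_⟩
  intro f hf x r hr
  set M : ℝ≥0∞ := maximalFn n f x with hMdef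
  set g : EuclideanSpace ℝ (Fin n) → ℝ≥0∞ :=
    fun y => ENNReal.ofReal (a (dist x y) * dist x y ^ (-(n : ℝ))) * f y with hgdef
  set A : ℕ → Set (EuclideanSpace ℝ (Fin n)) :=
    fun k => Metric.ball x (r / 2 ^ k) \ Metric.ball x (r / 2 ^ (k + 1)) with hAdef
  have hAmeas : ∀ k, MeasurableSet (A k) :=
    fun k => measurableSet_ball.diff measurableSet_ball
  have hrad : ∀ i j : ℕ, i ≤ j → r / 2 ^ j ≤ r / 2 ^ i := by
    intro i j hij
    exact div_le_div_of_nonneg_left hr.le (by positivity) (pow_le_pow_right₀ one_le_two hij)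
  have hdisjkey : ∀ i j : ℕ, i < j → Disjoint (A i) (A j) := by
    intro i j hij
    have hsub : A j ⊆ Metric.ball x (r / 2 ^ (i + 1)) := fun y hy =>
      Metric.ball_subset_ball (hrad (i + 1) j hij) hy.1
    exact (disjoint_sdiff_left.mono_right hsub)
  have hdisj : Pairwise (Function.onFun Disjoint A) := by
    intro i j hij
    rcases hij.lt_or_gt with h | h
    · exact hdisjkey i j h
    · exact (hdisjkey j i h).symm
  -- the cover
  have hcover : Metric.ball x r ⊆ insert x (⋃ k, A k) := by
    intro y hy
    rcases eq_or_ne y x with rfl | hne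
    · exact mem_insert _ _
    · right
      set d : ℝ := dist y x with hd
      have hd0 : 0 < d := dist_pos.mpr hne
      have hdr : d < r := hy
      have hex : ∃ k : ℕ, r / 2 ^ (k + 1) ≤ d := by
        obtain ⟨m, hm⟩ := pow_unbounded_of_one_lt (r / d) (by norm_num : (1:ℝ) < 2)
        refine ⟨m, ?_⟩
        have : r / 2 ^ m < d := by
          rw [div_lt_iff₀ (by positivity)]
          calc r = r / d * d := by field_simp
            _ < 2 ^ m * d := by exact mul_lt_mul_of_pos_right hm hd0
            _ = d * 2 ^ m := by ring
        have h2 : r / 2 ^ (m + 1) ≤ r / 2 ^ m := hrad m (m + 1) (Nat.le_succ _)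
        linarith
      obtain ⟨k, hk1, hk2⟩ : ∃ k : ℕ, r / 2 ^ (k + 1) ≤ d ∧ d < r / 2 ^ k := by
        refine ⟨Nat.find hex, Nat.find_spec hex, ?_⟩
        rcases Nat.eq_zero_or_pos (Nat.find hex) with h0 | h0
        · rw [h0]; simpa using hdr
        · have hlt : Nat.find hex - 1 < Nat.find hex := Nat.sub_lt h0 one_pos
          have hmin := Nat.find_min hex hlt
          push_neg at hmin
          have heq : Nat.find hex - 1 + 1 = Nat.find hex := Nat.succ_pred_eq_of_pos h0
          rw [heq] at hmin
          exact hmin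
      refine mem_iUnion.mpr ⟨k, ⟨hk2, ?_⟩⟩
      simp only [Metric.mem_ball, not_lt]
      exact hk1
  have hxnot : x ∉ ⋃ k, A k := by
    simp only [mem_iUnion, not_exists]
    intro k hk
    exact hk.2 (Metric.mem_ball_self (by positivity))
  have hgx : g x = 0 := by
    have : dist x x = 0 := dist_self x
    rw [hgdef]
    simp only [this]
    rw [Real.zero_rpow (by
      have : (1:ℝ) ≤ (n:ℝ) := by exact_mod_cast hn
      intro h; rw [neg_eq_zero] at h; linarith)]
    simp
  -- per-annulus bound
  have hannulus : ∀ k : ℕ,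
      (∫⁻ y in A k, g y) ≤
        ENNReal.ofReal (K * 2 ^ n * (2 * C₁)) * V * M *
          ∫⁻ t in Ioc (r / 2 ^ (k + 1)) (2 * (r / 2 ^ (k + 1))), ENNReal.ofReal (a t / t) := by
    intro k
    set δ : ℝ := r / 2 ^ (k + 1) with hδdef
    have hδ : 0 < δ := by positivity
    have h2δ : r / 2 ^ k = 2 * δ := by
      rw [hδdef]; field_simp; ring
    have hδn : δ ^ (-(n : ℝ)) * δ ^ n = 1 := by
      rw [← Real.rpow_natCast δ n, ← Real.rpow_add hδ]
      simp
    -- pointwise bound on the annulus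
    have hpt : ∀ y ∈ A k, g y ≤ ENNReal.ofReal (K * a δ * δ ^ (-(n : ℝ))) * f y := by
      intro y hy
      have hd1 : δ ≤ dist x y := by
        have := hy.2
        simp only [Metric.mem_ball, not_lt] at this
        rw [dist_comm]; exact this
      have hd2 : dist x y ≤ 2 * δ := by
        have := hy.1
        simp only [Metric.mem_ball] at this
        rw [dist_comm] at this
        linarith [h2δ ▸ this]
      have hdpos : 0 < dist x y := hδ.trans_le hd1
      have h1 : a (dist x y) ≤ K * a δ := hcomp δ (dist x y) hδ hd1 hd2
      have h2 : dist x y ^ (-(n : ℝ)) ≤ δ ^ (-(n : ℝ)) :=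
        Real.rpow_le_rpow_of_nonpos hδ hd1 (neg_nonpos.mpr (Nat.cast_nonneg n))
      refine mul_le_mul_left (ENNReal.ofReal_le_ofReal ?_) _
      exact mul_le_mul h1 h2 (Real.rpow_nonneg hdpos.le _)
        (mul_nonneg hK0.le (ha _ hδ))
    calc (∫⁻ y in A k, g y)
        ≤ ∫⁻ y in A k, ENNReal.ofReal (K * a δ * δ ^ (-(n : ℝ))) * f y :=
          setLIntegral_mono' (hAmeas k) hpt
      _ = ENNReal.ofReal (K * a δ * δ ^ (-(n : ℝ))) * ∫⁻ y in A k, f y :=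
          lintegral_const_mul' _ _ ENNReal.ofReal_ne_top
      _ ≤ ENNReal.ofReal (K * a δ * δ ^ (-(n : ℝ))) * ∫⁻ y in Metric.ball x (2 * δ), f y := by
          refine mul_le_mul_right (lintegral_mono_set ?_) _
          intro y hy
          have := hy.1
          rwa [h2δ] at this
      _ ≤ ENNReal.ofReal (K * a δ * δ ^ (-(n : ℝ))) * (volume (Metric.ball x (2 * δ)) * M) :=
          mul_le_mul_right (hmax f x (2 * δ) (by positivity)) _
      _ = ENNReal.ofReal (K * a δ * δ ^ (-(n : ℝ))) * (ENNReal.ofReal ((2 * δ) ^ n) * V * M) := by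
          rw [Measure.addHaar_ball volume x (by positivity)]
          simp only [finrank_euclideanSpace_fin]
          rw [hVdef]
      _ = ENNReal.ofReal (K * a δ * δ ^ (-(n : ℝ))) * ENNReal.ofReal ((2 * δ) ^ n) * (V * M) := by
          ring
      _ = ENNReal.ofReal (K * 2 ^ n) * ENNReal.ofReal (a δ) * (V * M) := by
          congr 1
          have hcnn : (0 : ℝ) ≤ K * a δ * δ ^ (-(n : ℝ)) :=
            mul_nonneg (mul_nonneg hK0.le (ha _ hδ)) (Real.rpow_nonneg hδ.le _)
          rw [← ENNReal.ofReal_mul hcnn,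
            ← ENNReal.ofReal_mul (mul_nonneg hK0.le (by positivity))]
          congr 1
          rw [mul_pow]
          linear_combination (K * 2 ^ n * a δ) * hδn
      _ ≤ ENNReal.ofReal (K * 2 ^ n) *
            (ENNReal.ofReal (2 * C₁) * ∫⁻ t in Ioc δ (2 * δ), ENNReal.ofReal (a t / t)) *
            (V * M) := by
          gcongr
          exact hlow δ hδ
      _ = ENNReal.ofReal (K * 2 ^ n * (2 * C₁)) * V * M *
            ∫⁻ t in Ioc δ (2 * δ), ENNReal.ofReal (a t / t) := by
          rw [ENNReal.ofReal_mul (mul_nonneg hK0.le (by positivity : (0:ℝ) ≤ 2 ^ n))]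
          ring
  -- sum over annuli
  have hIdisj : Pairwise (Function.onFun Disjoint fun k : ℕ =>
      Ioc (r / 2 ^ (k + 1)) (2 * (r / 2 ^ (k + 1)))) := by
    have key : ∀ i j : ℕ, i < j → Disjoint (Ioc (r / 2 ^ (i + 1)) (2 * (r / 2 ^ (i + 1))))
        (Ioc (r / 2 ^ (j + 1)) (2 * (r / 2 ^ (j + 1)))) := by
      intro i j hij
      rw [Set.Ioc_disjoint_Ioc]
      have h1 : 2 * (r / 2 ^ (j + 1)) = r / 2 ^ j := by field_simp; ring
      have h2 : r / 2 ^ j ≤ r / 2 ^ (i + 1) := hrad (i + 1) j hij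
      calc (2 * (r / 2 ^ (i + 1))) ⊓ (2 * (r / 2 ^ (j + 1)))
          ≤ 2 * (r / 2 ^ (j + 1)) := inf_le_right
        _ = r / 2 ^ j := h1
        _ ≤ r / 2 ^ (i + 1) := h2
        _ ≤ (r / 2 ^ (i + 1)) ⊔ (r / 2 ^ (j + 1)) := le_sup_left
    intro i j hij
    rcases hij.lt_or_gt with h | h
    · exact key i j h
    · exact (key j i h).symm
  have hIsum : (∑' k : ℕ, ∫⁻ t in Ioc (r / 2 ^ (k + 1)) (2 * (r / 2 ^ (k + 1))),
      ENNReal.ofReal (a t / t)) ≤ ∫⁻ t in Ioc (0 : ℝ) r, ENNReal.ofReal (a t / t) := by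
    rw [← lintegral_iUnion (fun k => measurableSet_Ioc) hIdisj]
    apply lintegral_mono_set
    intro t ht
    obtain ⟨k, hk⟩ := mem_iUnion.mp ht
    have hδ : (0:ℝ) < r / 2 ^ (k + 1) := by positivity
    have h1 : 2 * (r / 2 ^ (k + 1)) = r / 2 ^ k := by field_simp; ring
    constructor
    · exact hδ.trans hk.1
    · calc t ≤ 2 * (r / 2 ^ (k + 1)) := hk.2
        _ = r / 2 ^ k := h1
        _ ≤ r / 2 ^ 0 := hrad 0 k (Nat.zero_le _)
        _ = r := by norm_num
  -- putting everything together
  calc (∫⁻ y in Metric.ball x r, g y)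
      ≤ ∫⁻ y in insert x (⋃ k, A k), g y := lintegral_mono_set hcover
    _ = ∫⁻ y in {x} ∪ ⋃ k, A k, g y := by rw [Set.insert_eq]
    _ = (∫⁻ y in ({x} : Set _), g y) + ∫⁻ y in ⋃ k, A k, g y :=
        lintegral_union (MeasurableSet.iUnion hAmeas) (Set.disjoint_singleton_left.mpr hxnot)
    _ = ∫⁻ y in ⋃ k, A k, g y := by
        rw [lintegral_singleton, hgx, zero_mul, zero_add]
    _ = ∑' k : ℕ, ∫⁻ y in A k, g y := lintegral_iUnion hAmeas hdisj g
    _ ≤ ∑' k : ℕ, ENNReal.ofReal (K * 2 ^ n * (2 * C₁)) * V * M *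
          ∫⁻ t in Ioc (r / 2 ^ (k + 1)) (2 * (r / 2 ^ (k + 1))), ENNReal.ofReal (a t / t) :=
        ENNReal.tsum_le_tsum hannulus
    _ = ENNReal.ofReal (K * 2 ^ n * (2 * C₁)) * V * M *
          ∑' k : ℕ, ∫⁻ t in Ioc (r / 2 ^ (k + 1)) (2 * (r / 2 ^ (k + 1))),
            ENNReal.ofReal (a t / t) := ENNReal.tsum_mul_left
    _ ≤ ENNReal.ofReal (K * 2 ^ n * (2 * C₁)) * V * M *
          ∫⁻ t in Ioc (0 : ℝ) r, ENNReal.ofReal (a t / t) := mul_le_mul_right hIsum _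
    _ = ENNReal.ofReal (K * 2 ^ n * (2 * C₁) * V.toReal) *
          (∫⁻ t in Ioc (0 : ℝ) r, ENNReal.ofReal (a t / t)) * M := by
        have hsplit : ENNReal.ofReal (K * 2 ^ n * (2 * C₁) * V.toReal) =
            ENNReal.ofReal (K * 2 ^ n * (2 * C₁)) * V := by
          rw [ENNReal.ofReal_mul hKn.le, ENNReal.ofReal_toReal hVt]
        rw [hsplit]
        ring
end

section
/- Let n ≥ 1, 1 < p < ∞, and let a : (0,∞) → [0,∞) be such that a(t)/t^λ is almost decreasing for some 0 < λ < n/p. Then there exists a constant C > 0 such that for every measurable f : ℝⁿ → [0,∞) with ‖f‖_{L^p(ℝⁿ)} ≤ 1, every x ∈ ℝⁿ and every r > 0, ∫_{ℝⁿ ∖ B(x,r)} a(|x−y|) · |x−y|^{−n} · f(y) dy ≤ C · a(r) · r^{−n/p}. -/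
open MeasureTheory Set
open scoped ENNReal

lemma radial_aux (n : ℕ) (hn : 1 ≤ n) (s : ℝ) (hs : s + n < 0) :
    ∃ c > (0:ℝ), ∀ (x : EuclideanSpace ℝ (Fin n)) (r : ℝ), 0 < r →
      (∫⁻ y in (Metric.ball x r)ᶜ, ENNReal.ofReal (dist x y ^ s)) ≤
        ENNReal.ofReal (c * r ^ (s + (n : ℝ))) := by
  haveI : Nonempty (Fin n) := Fin.pos_iff_nonempty.mp hn
  haveI : Nontrivial (EuclideanSpace ℝ (Fin n)) := inferInstance
  set V : ℝ≥0∞ := volume (Metric.ball (0 : EuclideanSpace ℝ (Fin n)) 1) with hV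
  have hVtop : V ≠ ⊤ := measure_ball_lt_top.ne
  set ρ : ℝ := (2:ℝ) ^ (s + (n:ℝ)) with hρ
  have hρ0 : 0 < ρ := Real.rpow_pos_of_pos two_pos _
  have hρ1 : ρ < 1 := Real.rpow_lt_one_of_one_lt_of_neg one_lt_two hs
  set T : ℝ≥0∞ := ENNReal.ofReal ((2:ℝ) ^ (n:ℝ)) * V * (1 - ENNReal.ofReal ρ)⁻¹ with hT
  have hTtop : T ≠ ⊤ := by
    apply ENNReal.mul_ne_top (ENNReal.mul_ne_top ENNReal.ofReal_ne_top hVtop)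
    rw [ENNReal.inv_ne_top]
    exact (tsub_pos_of_lt (ENNReal.ofReal_lt_one.2 hρ1)).ne'
  refine ⟨T.toReal + 1, by positivity, fun x r hr => ?_⟩
  set A : ℕ → Set (EuclideanSpace ℝ (Fin n)) :=
    fun k => Metric.ball x (2^(k+1) * r) \ Metric.ball x (2^k * r) with hA
  have hsub : (Metric.ball x r)ᶜ ⊆ ⋃ k, A k := by
    intro y hy
    have hd : r ≤ dist y x := by simpa [Metric.mem_ball, not_lt] using hy
    have hd' : 1 ≤ dist y x / r := (one_le_div hr).2 hd
    obtain ⟨k, h1, h2⟩ := exists_nat_pow_near hd' one_lt_two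
    rw [le_div_iff₀ hr] at h1
    rw [div_lt_iff₀ hr] at h2
    exact Set.mem_iUnion.2 ⟨k, Metric.mem_ball.2 h2, by simp [Metric.mem_ball, not_lt, h1]⟩
  have hsle : s ≤ 0 := by
    have : (0:ℝ) ≤ n := Nat.cast_nonneg n
    linarith
  have key : ∀ k : ℕ, ((2:ℝ)^k * r) ^ s * ((2:ℝ)^(k+1) * r) ^ (n:ℝ)
      = (2:ℝ)^(n:ℝ) * ρ^k * r ^ (s + (n:ℝ)) := by
    intro k
    have e1 : ((2:ℝ)^k * r) ^ s = (2:ℝ)^((k:ℝ)*s) * r^s := by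
      rw [Real.mul_rpow (by positivity) hr.le, ← Real.rpow_natCast (2:ℝ) k,
        ← Real.rpow_mul (by norm_num)]
    have e2 : ((2:ℝ)^(k+1) * r) ^ (n:ℝ) = (2:ℝ)^(((k:ℝ)+1)*(n:ℝ)) * r^(n:ℝ) := by
      rw [Real.mul_rpow (by positivity) hr.le, ← Real.rpow_natCast (2:ℝ) (k+1),
        ← Real.rpow_mul (by norm_num)]
      push_cast
      ring_nf
    have e3 : ρ^k = (2:ℝ)^((s+(n:ℝ))*(k:ℝ)) := by
      rw [hρ, ← Real.rpow_natCast ((2:ℝ)^(s+(n:ℝ))) k, ← Real.rpow_mul (by norm_num)]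
    rw [e1, e2, e3,
      show (2:ℝ)^((k:ℝ)*s) * r^s * ((2:ℝ)^(((k:ℝ)+1)*(n:ℝ)) * r^(n:ℝ))
          = (2:ℝ)^((k:ℝ)*s) * (2:ℝ)^(((k:ℝ)+1)*(n:ℝ)) * (r^s * r^(n:ℝ)) by ring,
      ← Real.rpow_add two_pos, ← Real.rpow_add hr, ← Real.rpow_add two_pos,
      show (k:ℝ)*s + ((k:ℝ)+1)*(n:ℝ) = (n:ℝ) + (s+(n:ℝ))*(k:ℝ) by ring]
  have step : ∀ k : ℕ, (∫⁻ y in A k, ENNReal.ofReal (dist x y ^ s)) ≤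
      ENNReal.ofReal ρ ^ k * (ENNReal.ofReal ((2:ℝ)^(n:ℝ) * r ^ (s + (n:ℝ))) * V) := by
    intro k
    have hA0 : (0:ℝ) < 2^k * r := by positivity
    have h1 : (∫⁻ y in A k, ENNReal.ofReal (dist x y ^ s)) ≤
        ENNReal.ofReal (((2:ℝ)^k * r) ^ s) * volume (A k) := by
      rw [← setLIntegral_const]
      refine setLIntegral_mono measurable_const fun y hy => ?_
      have h2 : (2:ℝ)^k * r ≤ dist x y := by
        have := hy.2
        rw [Metric.mem_ball, not_lt, dist_comm] at this
        exact this
      exact ENNReal.ofReal_le_ofReal (Real.rpow_le_rpow_of_nonpos hA0 h2 hsle)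
    have h3 : volume (A k) ≤ ENNReal.ofReal (((2:ℝ)^(k+1) * r) ^ (n:ℝ)) * V := by
      calc volume (A k) ≤ volume (Metric.ball x (2^(k+1) * r)) := measure_mono diff_subset
        _ = ENNReal.ofReal ((2^(k+1) * r) ^ Module.finrank ℝ (EuclideanSpace ℝ (Fin n))) * V :=
            Measure.addHaar_ball volume x (by positivity)
        _ = ENNReal.ofReal (((2:ℝ)^(k+1) * r) ^ (n:ℝ)) * V := by
            rw [finrank_euclideanSpace_fin, Real.rpow_natCast]
    calc (∫⁻ y in A k, ENNReal.ofReal (dist x y ^ s))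
        ≤ ENNReal.ofReal (((2:ℝ)^k * r) ^ s) * (ENNReal.ofReal (((2:ℝ)^(k+1) * r) ^ (n:ℝ)) * V) :=
          h1.trans (mul_le_mul_right h3 _)
      _ = ENNReal.ofReal (((2:ℝ)^k * r) ^ s * ((2:ℝ)^(k+1) * r) ^ (n:ℝ)) * V := by
          rw [ENNReal.ofReal_mul (by positivity), mul_assoc]
      _ = ENNReal.ofReal ((2:ℝ)^(n:ℝ) * ρ^k * r ^ (s + (n:ℝ))) * V := by rw [key k]
      _ = ENNReal.ofReal ρ ^ k * (ENNReal.ofReal ((2:ℝ)^(n:ℝ) * r ^ (s + (n:ℝ))) * V) := by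
          rw [show (2:ℝ)^(n:ℝ) * ρ^k * r ^ (s + (n:ℝ)) = ρ^k * ((2:ℝ)^(n:ℝ) * r ^ (s + (n:ℝ)))
              by ring, ENNReal.ofReal_mul (by positivity), ENNReal.ofReal_pow hρ0.le, mul_assoc]
  calc (∫⁻ y in (Metric.ball x r)ᶜ, ENNReal.ofReal (dist x y ^ s))
      ≤ ∫⁻ y in ⋃ k, A k, ENNReal.ofReal (dist x y ^ s) := lintegral_mono_set hsub
    _ ≤ ∑' k, ∫⁻ y in A k, ENNReal.ofReal (dist x y ^ s) := lintegral_iUnion_le _ _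
    _ ≤ ∑' k, ENNReal.ofReal ρ ^ k * (ENNReal.ofReal ((2:ℝ)^(n:ℝ) * r ^ (s + (n:ℝ))) * V) :=
        ENNReal.tsum_le_tsum step
    _ = (1 - ENNReal.ofReal ρ)⁻¹ * (ENNReal.ofReal ((2:ℝ)^(n:ℝ) * r ^ (s + (n:ℝ))) * V) := by
        rw [ENNReal.tsum_mul_right, ENNReal.tsum_geometric]
    _ = T * ENNReal.ofReal (r ^ (s + (n:ℝ))) := by
        rw [hT, ENNReal.ofReal_mul (by positivity)]
        ring
    _ ≤ ENNReal.ofReal (T.toReal + 1) * ENNReal.ofReal (r ^ (s + (n:ℝ))) := by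
        gcongr
        calc T = ENNReal.ofReal T.toReal := (ENNReal.ofReal_toReal hTtop).symm
          _ ≤ ENNReal.ofReal (T.toReal + 1) := ENNReal.ofReal_le_ofReal (by linarith)
    _ = ENNReal.ofReal ((T.toReal + 1) * r ^ (s + (n:ℝ))) := by
        rw [ENNReal.ofReal_mul (by positivity)]
/-- Estimate for the far-away part of a generalized potential: if `a(t)/t^λ` is almost
decreasing for some `0 < λ < n/p` and `‖f‖_{L^p} ≤ 1`, then the integral of
`a(|x-y|)|x-y|^{-n} f(y)` over the complement of `B(x,r)` is at most `C a(r) r^{-n/p}`. -/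
theorem far_part_le
    (n : ℕ) (hn : 1 ≤ n) (p : ℝ) (hp : 1 < p)
    (a : ℝ → ℝ) (ha : ∀ t : ℝ, 0 < t → 0 ≤ a t)
    (lam : ℝ) (hlam0 : 0 < lam) (hlamnp : lam < n / p)
    (hdec : ∃ C > (0 : ℝ), ∀ t₁ t₂ : ℝ, 0 < t₁ → t₁ < t₂ →
      a t₂ / t₂ ^ lam ≤ C * (a t₁ / t₁ ^ lam)) :
    ∃ C > (0 : ℝ), ∀ f : EuclideanSpace ℝ (Fin n) → ℝ≥0∞, Measurable f →
      (∫⁻ y, f y ^ p) ^ (1 / p) ≤ 1 →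
      ∀ (x : EuclideanSpace ℝ (Fin n)) (r : ℝ), 0 < r →
        (∫⁻ y in (Metric.ball x r)ᶜ,
            ENNReal.ofReal (a (dist x y) * dist x y ^ (-(n : ℝ))) * f y) ≤
          ENNReal.ofReal (C * a r * r ^ (-(n : ℝ) / p)) := by
  haveI : Nonempty (Fin n) := Fin.pos_iff_nonempty.mp hn
  haveI : Nontrivial (EuclideanSpace ℝ (Fin n)) := inferInstance
  obtain ⟨Cd, hCd, hdec⟩ := hdec
  have hp0 : 0 < p := lt_trans one_pos hp
  set q : ℝ := p / (p - 1) with hq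
  have hpq : p.HolderConjugate q := Real.HolderConjugate.conjExponent hp
  have hq0 : 0 < q := hpq.symm.pos
  have hipq : p⁻¹ + q⁻¹ = 1 := hpq.inv_add_inv_eq_one
  set s : ℝ := (lam - (n:ℝ)) * q with hsdef
  have hsn : s + (n:ℝ) < 0 := by
    have h1 : (n:ℝ)/p - (n:ℝ) = -((n:ℝ) * q⁻¹) := by
      have : q⁻¹ = 1 - p⁻¹ := by linarith
      rw [this, div_eq_mul_inv]; ring
    have h2 : lam - (n:ℝ) < -((n:ℝ) * q⁻¹) := by linarith
    have h3 : (lam - (n:ℝ)) * q < -((n:ℝ) * q⁻¹) * q := mul_lt_mul_of_pos_right h2 hq0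
    have h4 : -((n:ℝ) * q⁻¹) * q = -(n:ℝ) := by field_simp
    rw [hsdef]; linarith
  obtain ⟨c, hc, hrad⟩ := radial_aux n hn s hsn
  refine ⟨Cd * c ^ (1/q), by positivity, fun f hf hfp x r hr => ?_⟩
  have har : 0 ≤ a r := ha r hr
  set K : ℝ := Cd * a r * r ^ (-lam) with hK
  have hK0 : 0 ≤ K := by positivity
  set S : Set (EuclideanSpace ℝ (Fin n)) := (Metric.ball x r)ᶜ with hS
  have hSm : MeasurableSet S := Metric.isOpen_ball.measurableSet.compl
  have hdist : Measurable fun y : EuclideanSpace ℝ (Fin n) => dist x y :=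
    (continuous_const.dist continuous_id).measurable
  have hg : Measurable fun y : EuclideanSpace ℝ (Fin n) =>
      ENNReal.ofReal (K * dist x y ^ (lam - (n:ℝ))) :=
    (measurable_const.mul (hdist.pow measurable_const)).ennreal_ofReal
  -- step 1: pointwise a.e. bound
  have hstep1 : (∫⁻ y in S, ENNReal.ofReal (a (dist x y) * dist x y ^ (-(n:ℝ))) * f y) ≤
      ∫⁻ y in S, ENNReal.ofReal (K * dist x y ^ (lam - (n:ℝ))) * f y := by
    refine lintegral_mono_ae ?_
    have h1 : ∀ᵐ y ∂(volume.restrict S), y ∉ Metric.sphere x r :=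
      ae_restrict_of_ae (measure_eq_zero_iff_ae_notMem.mp (Measure.addHaar_sphere volume x r))
    filter_upwards [h1, ae_restrict_mem hSm] with y hy1 hy2
    have hd : r < dist x y := by
      have hle : r ≤ dist y x := by simpa [hS, Metric.mem_ball, not_lt] using hy2
      rcases hle.lt_or_eq with h | h
      · rwa [dist_comm]
      · exact absurd (show y ∈ Metric.sphere x r from by
            rw [Metric.mem_sphere]; exact h.symm) hy1
    have hd0 : 0 < dist x y := lt_trans hr hd
    refine mul_le_mul_left (ENNReal.ofReal_le_ofReal ?_) _
    have h2 : a (dist x y) ≤ Cd * (a r / r ^ lam) * dist x y ^ lam := by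
      have h3 := hdec r (dist x y) hr hd
      rw [div_le_iff₀ (Real.rpow_pos_of_pos hd0 lam)] at h3
      exact h3
    calc a (dist x y) * dist x y ^ (-(n:ℝ))
        ≤ (Cd * (a r / r ^ lam) * dist x y ^ lam) * dist x y ^ (-(n:ℝ)) := by
          apply mul_le_mul_of_nonneg_right h2 (Real.rpow_nonneg hd0.le _)
      _ = K * dist x y ^ (lam - (n:ℝ)) := by
          rw [hK, Real.rpow_neg hr.le, ← div_eq_mul_inv, mul_assoc,
            ← Real.rpow_add hd0, sub_eq_add_neg]
          ring
  -- step 2: Hölder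
  have hstep2 : (∫⁻ y in S, ENNReal.ofReal (K * dist x y ^ (lam - (n:ℝ))) * f y) ≤
      (∫⁻ y in S, ENNReal.ofReal (K * dist x y ^ (lam - (n:ℝ))) ^ q) ^ (1/q) *
        (∫⁻ y in S, f y ^ p) ^ (1/p) :=
    ENNReal.lintegral_mul_le_Lp_mul_Lq _ hpq.symm hg.aemeasurable hf.aemeasurable
  -- step 3: compute the q-integral
  have hstep3 : (∫⁻ y in S, ENNReal.ofReal (K * dist x y ^ (lam - (n:ℝ))) ^ q) ≤
      ENNReal.ofReal (K ^ q * (c * r ^ (s + (n:ℝ)))) := by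
    have he : ∀ y ∈ S, ENNReal.ofReal (K * dist x y ^ (lam - (n:ℝ))) ^ q =
        ENNReal.ofReal (K ^ q) * ENNReal.ofReal (dist x y ^ s) := by
      intro y hy
      have hd0 : 0 < dist x y := by
        have hle : r ≤ dist y x := by simpa [hS, Metric.mem_ball, not_lt] using hy
        rw [dist_comm] at hle; linarith
      rw [ENNReal.ofReal_rpow_of_nonneg
          (mul_nonneg hK0 (Real.rpow_nonneg hd0.le _)) hq0.le,
        Real.mul_rpow hK0 (Real.rpow_nonneg hd0.le _),
        ← Real.rpow_mul hd0.le, ← hsdef, ENNReal.ofReal_mul (Real.rpow_nonneg hK0 q)]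
    rw [setLIntegral_congr_fun hSm he,
      lintegral_const_mul' _ _ ENNReal.ofReal_ne_top]
    calc ENNReal.ofReal (K ^ q) * ∫⁻ y in S, ENNReal.ofReal (dist x y ^ s)
        ≤ ENNReal.ofReal (K ^ q) * ENNReal.ofReal (c * r ^ (s + (n:ℝ))) :=
          mul_le_mul_right (hrad x r hr) _
      _ = ENNReal.ofReal (K ^ q * (c * r ^ (s + (n:ℝ)))) := by
          rw [ENNReal.ofReal_mul (Real.rpow_nonneg hK0 q)]
  have hstep4 : (∫⁻ y in S, f y ^ p) ^ (1/p) ≤ 1 := by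
    refine le_trans (ENNReal.rpow_le_rpow (setLIntegral_le_lintegral _ _) (by positivity)) hfp
  -- final real computation
  have hfinal : (K ^ q * (c * r ^ (s + (n:ℝ)))) ^ (1/q) =
      Cd * c ^ (1/q) * a r * r ^ (-(n:ℝ)/p) := by
    have hqne : q ≠ 0 := hq0.ne'
    have e1 : (K ^ q) ^ (1/q) = K := by
      rw [← Real.rpow_mul hK0, mul_one_div_cancel hqne, Real.rpow_one]
    have e2 : (r ^ (s + (n:ℝ))) ^ (1/q) = r ^ ((s + (n:ℝ)) * (1/q)) :=
      (Real.rpow_mul hr.le _ _).symm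
    rw [Real.mul_rpow (Real.rpow_nonneg hK0 q) (by positivity),
      Real.mul_rpow hc.le (Real.rpow_nonneg hr.le _), e1, e2]
    have hexp : -lam + (s + (n:ℝ)) * (1/q) = -(n:ℝ)/p := by
      have hinv : q⁻¹ = 1 - p⁻¹ := by linarith
      have h5 : (s + (n:ℝ)) * (1/q) = (lam - (n:ℝ)) + (n:ℝ) * q⁻¹ := by
        rw [hsdef]; field_simp
      rw [h5, hinv, neg_div, div_eq_mul_inv]; ring
    calc K * (c ^ (1/q) * r ^ ((s + (n:ℝ)) * (1/q)))
        = Cd * c ^ (1/q) * (a r) * (r ^ (-lam) * r ^ ((s + (n:ℝ)) * (1/q))) := by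
          rw [hK]; ring
      _ = Cd * c ^ (1/q) * a r * r ^ (-(n:ℝ)/p) := by
          rw [← Real.rpow_add hr, hexp]
  calc (∫⁻ y in S, ENNReal.ofReal (a (dist x y) * dist x y ^ (-(n:ℝ))) * f y)
      ≤ (∫⁻ y in S, ENNReal.ofReal (K * dist x y ^ (lam - (n:ℝ))) ^ q) ^ (1/q) *
        (∫⁻ y in S, f y ^ p) ^ (1/p) := hstep1.trans hstep2
    _ ≤ (ENNReal.ofReal (K ^ q * (c * r ^ (s + (n:ℝ))))) ^ (1/q) * 1 := by
        exact mul_le_mul' (ENNReal.rpow_le_rpow hstep3 (by positivity)) hstep4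
    _ = ENNReal.ofReal ((K ^ q * (c * r ^ (s + (n:ℝ)))) ^ (1/q)) := by
        rw [mul_one, ENNReal.ofReal_rpow_of_nonneg
          (mul_nonneg (Real.rpow_nonneg hK0 q) (by positivity)) (by positivity)]
    _ = ENNReal.ofReal (Cd * c ^ (1/q) * a r * r ^ (-(n:ℝ)/p)) := by rw [hfinal]
end

section
/- Let n ≥ 1, 1 < p < ∞, and let a : (0,∞) → [0,∞) be almost increasing such that a(t)/t^λ is almost decreasing for some 0 < λ < n/p and ∫₀^1 a(t)/t dt < ∞. Set A(r) = ∫₀^r a(t)/t dt and define the generalized potential I_a f(x) = ∫_{ℝⁿ} a(|x−y|) · |x−y|^{−n} · f(y) dy. Then there exists a constant C > 0 such that for every measurable f : ℝⁿ → [0,∞) with ‖f‖_{L^p(ℝⁿ)} ≤ 1, every x ∈ ℝⁿ and every r > 0, I_a f(x) ≤ C · ( Mf(x) + r^{−n/p} ) · A(r), where Mf(x) = sup_{ρ>0} (1/|B(x,ρ)|) ∫_{B(x,ρ)} f(y) dy is the Hardy–Littlewood maximal function. -/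
open MeasureTheory Set
open scoped ENNReal

lemma lintegral_ball_le_maximal (n : ℕ) (f : EuclideanSpace ℝ (Fin n) → ℝ≥0∞)
    (x : EuclideanSpace ℝ (Fin n)) {ρ : ℝ} (hρ : 0 < ρ) :
    ∫⁻ y in Metric.ball x ρ, f y ≤ volume (Metric.ball x ρ) * maximalFn n f x := by
  have h0 : volume (Metric.ball x ρ) ≠ 0 := (Metric.measure_ball_pos _ _ hρ).ne'
  have ht : volume (Metric.ball x ρ) ≠ ⊤ := measure_ball_lt_top.ne
  have hle : (volume (Metric.ball x ρ))⁻¹ * ∫⁻ y in Metric.ball x ρ, f y ≤ maximalFn n f x :=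
    le_iSup₂ (f := fun ρ (_ : 0 < ρ) =>
      (volume (Metric.ball x ρ))⁻¹ * ∫⁻ y in Metric.ball x ρ, f y) ρ hρ
  calc ∫⁻ y in Metric.ball x ρ, f y
      = volume (Metric.ball x ρ) * ((volume (Metric.ball x ρ))⁻¹ * ∫⁻ y in Metric.ball x ρ, f y) := by
        rw [← mul_assoc, ENNReal.mul_inv_cancel h0 ht, one_mul]
    _ ≤ _ := mul_le_mul_right hle _

lemma lintegral_set_le_pow (n : ℕ) {p q : ℝ} (hpq : p.HolderConjugate q)
    (f : EuclideanSpace ℝ (Fin n) → ℝ≥0∞) (hf : Measurable f)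
    (hf1 : (∫⁻ y, f y ^ p) ^ (1/p) ≤ 1) (s : Set (EuclideanSpace ℝ (Fin n))) :
    ∫⁻ y in s, f y ≤ (volume s) ^ (1/q) := by
  have h := ENNReal.lintegral_mul_le_Lp_mul_Lq (volume.restrict s) hpq hf.aemeasurable
    (aemeasurable_const (b := (1:ℝ≥0∞)))
  simp only [Pi.mul_apply, mul_one, ENNReal.one_rpow, lintegral_const, one_mul,
    Measure.restrict_apply_univ] at h
  refine h.trans ?_
  have h1 : (∫⁻ y in s, f y ^ p) ^ (1/p) ≤ 1 :=
    le_trans (ENNReal.rpow_le_rpow (setLIntegral_le_lintegral s _) hpq.one_div_nonneg) hf1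
  calc (∫⁻ y in s, f y ^ p) ^ (1/p) * (volume s) ^ (1/q)
      ≤ 1 * (volume s) ^ (1/q) := mul_le_mul_left h1 _
    _ = (volume s) ^ (1/q) := one_mul _

set_option maxHeartbeats 1000000 in
/-- Hedberg estimate for the generalized potential
`I_a f(x) = ∫_{ℝⁿ} a(|x-y|)|x-y|^{-n} f(y) dy`: for `‖f‖_{L^p} ≤ 1`,
`I_a f(x) ≤ C (Mf(x) + r^{-n/p}) A(r)` where `A(r) = ∫₀^r a(t)/t dt`. -/
theorem potential_le_hedberg
    (n : ℕ) (hn : 1 ≤ n) (p : ℝ) (hp : 1 < p)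
    (a : ℝ → ℝ) (ha : ∀ t : ℝ, 0 < t → 0 ≤ a t)
    (hinc : ∃ C > (0 : ℝ), ∀ t₁ t₂ : ℝ, 0 < t₁ → t₁ < t₂ → a t₁ ≤ C * a t₂)
    (lam : ℝ) (hlam0 : 0 < lam) (hlamnp : lam < n / p)
    (hdec : ∃ C > (0 : ℝ), ∀ t₁ t₂ : ℝ, 0 < t₁ → t₁ < t₂ →
      a t₂ / t₂ ^ lam ≤ C * (a t₁ / t₁ ^ lam))
    (hfin : (∫⁻ t in Ioc (0 : ℝ) 1, ENNReal.ofReal (a t / t)) < ⊤) :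
    ∃ C > (0 : ℝ), ∀ f : EuclideanSpace ℝ (Fin n) → ℝ≥0∞, Measurable f →
      (∫⁻ y, f y ^ p) ^ (1 / p) ≤ 1 →
      ∀ (x : EuclideanSpace ℝ (Fin n)) (r : ℝ), 0 < r →
        (∫⁻ y, ENNReal.ofReal (a (dist x y) * dist x y ^ (-(n : ℝ))) * f y) ≤
          ENNReal.ofReal C * (maximalFn n f x + ENNReal.ofReal (r ^ (-(n : ℝ) / p))) *
            ∫⁻ t in Ioc (0 : ℝ) r, ENNReal.ofReal (a t / t) := by
  classical
  obtain ⟨C₀, hC₀, hd⟩ := hdec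
  set q : ℝ := Real.conjExponent p with hq_def
  have hpq : p.HolderConjugate q := Real.HolderConjugate.conjExponent hp
  have hp0 : (0:ℝ) < p := hpq.pos
  have hq0 : (0:ℝ) < q := hpq.symm.pos
  have hn0 : (0:ℝ) < (n:ℝ) := by exact_mod_cast hn
  -- the doubling constant
  set D : ℝ := max 1 (C₀ * 2 ^ lam) with hD_def
  have hD1 : (1:ℝ) ≤ D := le_max_left _ _
  have hD0 : (0:ℝ) < D := lt_of_lt_of_le one_pos hD1
  have h2lam1 : (1:ℝ) ≤ 2 ^ lam := Real.one_le_rpow one_le_two hlam0.le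
  -- basic growth estimate
  have key0 : ∀ s t : ℝ, 0 < s → s < t → a t ≤ C₀ * (t/s) ^ lam * a s := by
    intro s t hs hst
    have ht : 0 < t := hs.trans hst
    have h2 := hd s t hs hst
    have htl : (0:ℝ) < t ^ lam := Real.rpow_pos_of_pos ht _
    have hsl : (0:ℝ) < s ^ lam := Real.rpow_pos_of_pos hs _
    have h3 : a t ≤ C₀ * (a s / s ^ lam) * t ^ lam := (div_le_iff₀ htl).mp h2
    calc a t ≤ C₀ * (a s / s ^ lam) * t ^ lam := h3
      _ = C₀ * (t/s) ^ lam * a s := by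
          rw [Real.div_rpow ht.le hs.le]; field_simp
  have key2 : ∀ s t : ℝ, 0 < s → s ≤ t → a t ≤ D * (t/s) ^ lam * a s := by
    intro s t hs hst
    have hts1 : (1:ℝ) ≤ t / s := (one_le_div hs).mpr hst
    have hts : (1:ℝ) ≤ (t/s) ^ lam := Real.one_le_rpow hts1 hlam0.le
    rcases eq_or_lt_of_le hst with rfl | h
    · calc a s = 1 * a s := (one_mul _).symm
        _ ≤ (D * (s/s) ^ lam) * a s := by
            refine mul_le_mul_of_nonneg_right ?_ (ha s hs)
            nlinarith
    · have h1 := key0 s t hs h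
      have hC₀D : C₀ ≤ D := le_trans (by nlinarith) (le_max_right _ _)
      have hann : 0 ≤ a s := ha s hs
      have hrp : 0 ≤ (t/s) ^ lam := Real.rpow_nonneg (div_nonneg (hs.trans h).le hs.le) lam
      have e1 : C₀ * (t/s) ^ lam * a s ≤ D * (t/s) ^ lam * a s :=
        mul_le_mul_of_nonneg_right (mul_le_mul_of_nonneg_right hC₀D hrp) hann
      linarith
  have key1 : ∀ s t : ℝ, 0 < s → s ≤ t → t ≤ 2*s → a t ≤ D * a s := by
    intro s t hs hst ht2
    rcases eq_or_lt_of_le hst with rfl | h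
    · nlinarith [ha s hs]
    · have h1 := key0 s t hs h
      have h2 : (t/s) ^ lam ≤ 2 ^ lam := by
        apply Real.rpow_le_rpow (div_nonneg (hs.trans h).le hs.le) _ hlam0.le
        rw [div_le_iff₀ hs]; linarith
      have hC₀D : C₀ * 2 ^ lam ≤ D := le_max_right _ _
      have hann : 0 ≤ a s := ha s hs
      have e1 : C₀ * (t/s) ^ lam * a s ≤ C₀ * 2 ^ lam * a s :=
        mul_le_mul_of_nonneg_right (mul_le_mul_of_nonneg_left h2 hC₀.le) hann
      have e2 : C₀ * 2 ^ lam * a s ≤ D * a s := mul_le_mul_of_nonneg_right hC₀D hann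
      linarith
  -- integral lower bound for a s
  have keyA : ∀ s : ℝ, 0 < s → ENNReal.ofReal (a s) ≤
      ENNReal.ofReal (2*D) * ∫⁻ t in Ioc (s/2) s, ENNReal.ofReal (a t / t) := by
    intro s hs
    have hlow : ∫⁻ t in Ioc (s/2) s, ENNReal.ofReal (a s / (D*s))
        ≤ ∫⁻ t in Ioc (s/2) s, ENNReal.ofReal (a t / t) := by
      refine setLIntegral_mono' measurableSet_Ioc ?_
      intro t ht
      apply ENNReal.ofReal_le_ofReal
      have ht0 : 0 < t := lt_trans (by positivity) ht.1
      have h1 : a s ≤ D * a t := key1 t s ht0 ht.2 (by linarith [ht.1])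
      rw [div_le_div_iff₀ (by positivity) ht0]
      have h2 : a s * t ≤ a s * s := by
        have := ha s hs
        nlinarith [ht.2]
      nlinarith [ha t ht0, ht.2, hs]
    have hconst : ∫⁻ _ in Ioc (s/2) s, ENNReal.ofReal (a s / (D*s))
        = ENNReal.ofReal (a s / (D*s)) * ENNReal.ofReal (s/2) := by
      rw [setLIntegral_const, Real.volume_Ioc]
      congr 2
      ring
    calc ENNReal.ofReal (a s)
        = ENNReal.ofReal (2*D) * (ENNReal.ofReal (a s / (D*s)) * ENNReal.ofReal (s/2)) := by
          rw [← ENNReal.ofReal_mul (div_nonneg (ha s hs) (mul_nonneg hD0.le hs.le)),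
            ← ENNReal.ofReal_mul (mul_pos two_pos hD0).le]
          congr 1
          field_simp
      _ = ENNReal.ofReal (2*D) * ∫⁻ _ in Ioc (s/2) s, ENNReal.ofReal (a s / (D*s)) := by
          rw [hconst]
      _ ≤ _ := mul_le_mul_right hlow _
  -- geometric data
  set θ : ℝ := 2 ^ (lam - (n:ℝ)/p) with hθ_def
  have hθ0 : 0 < θ := Real.rpow_pos_of_pos two_pos _
  have hθ1 : θ < 1 := Real.rpow_lt_one_of_one_lt_of_neg one_lt_two (by rw [sub_neg]; exact hlamnp)
  set G : ℝ≥0∞ := (1 - ENNReal.ofReal θ)⁻¹ with hG_def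
  have hGt : G ≠ ⊤ := by
    rw [hG_def, ENNReal.inv_ne_top]
    simp [tsub_eq_zero_iff_le, ENNReal.one_le_ofReal, hθ1.not_ge]
  set ν : ℝ≥0∞ := volume (Metric.ball (0 : EuclideanSpace ℝ (Fin n)) 1) with hν_def
  have hνt : ν ≠ ⊤ := measure_ball_lt_top.ne
  -- the constant
  set K : ℝ := (ENNReal.ofReal (2*D^2*4^n) * ν).toReal
    + (ENNReal.ofReal (2*D^3*4^((n:ℝ)/q)) * ν ^ (1/q) * G).toReal + 1 with hK_def
  have hK1 : (1:ℝ) ≤ K := by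
    have h1 : 0 ≤ (ENNReal.ofReal (2*D^2*4^n) * ν).toReal := ENNReal.toReal_nonneg
    have h2 : 0 ≤ (ENNReal.ofReal (2*D^3*4^((n:ℝ)/q)) * ν ^ (1/q) * G).toReal :=
      ENNReal.toReal_nonneg
    simp only [hK_def]; linarith
  refine ⟨K, by linarith, ?_⟩
  intro f hfm hf1 x r hr
  set Mf := maximalFn n f x with hMf_def
  set A : ℝ≥0∞ := ∫⁻ t in Ioc (0:ℝ) r, ENNReal.ofReal (a t / t) with hA_def
  set g : EuclideanSpace ℝ (Fin n) → ℝ≥0∞ :=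
    fun y => ENNReal.ofReal (a (dist x y) * dist x y ^ (-(n : ℝ))) * f y with hg_def
  have hballvol : ∀ R : ℝ, 0 < R →
      volume (Metric.ball x R) = ENNReal.ofReal (R ^ n) * ν := by
    intro R hR
    rw [hν_def, Measure.addHaar_ball_of_pos volume x hR, finrank_euclideanSpace_fin]
  -- the annuli
  set Ann : ℤ → Set (EuclideanSpace ℝ (Fin n)) :=
    fun k => {y | dist x y ∈ Ioc ((2:ℝ)^k * r) ((2:ℝ)^(k+1) * r)} with hAnn_def
  have hdistm : Measurable fun y : EuclideanSpace ℝ (Fin n) => dist x y :=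
    (continuous_const.dist continuous_id).measurable
  have hAnnMeas : ∀ k : ℤ, MeasurableSet (Ann k) := fun k => hdistm measurableSet_Ioc
  have hzr : ∀ k : ℤ, (0:ℝ) < (2:ℝ)^k * r := fun k => by positivity
  have hIocDisj : ∀ k k' : ℤ, k ≠ k' →
      Disjoint (Ioc ((2:ℝ)^k * r) ((2:ℝ)^(k+1) * r)) (Ioc ((2:ℝ)^k' * r) ((2:ℝ)^(k'+1) * r)) := by
    intro k k' hkk
    rw [Set.Ioc_disjoint_Ioc]
    rcases lt_or_gt_of_ne hkk with h | h
    · calc min ((2:ℝ)^(k+1) * r) ((2:ℝ)^(k'+1) * r) ≤ (2:ℝ)^(k+1) * r := min_le_left _ _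
        _ ≤ (2:ℝ)^k' * r := by
            have : (2:ℝ)^(k+1) ≤ (2:ℝ)^k' := zpow_le_zpow_right₀ one_le_two (by omega)
            nlinarith
        _ ≤ max ((2:ℝ)^k * r) ((2:ℝ)^k' * r) := le_max_right _ _
    · calc min ((2:ℝ)^(k+1) * r) ((2:ℝ)^(k'+1) * r) ≤ (2:ℝ)^(k'+1) * r := min_le_right _ _
        _ ≤ (2:ℝ)^k * r := by
            have : (2:ℝ)^(k'+1) ≤ (2:ℝ)^k := zpow_le_zpow_right₀ one_le_two (by omega)
            nlinarith
        _ ≤ max ((2:ℝ)^k * r) ((2:ℝ)^k' * r) := le_max_left _ _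
  have hAnnDisj : ∀ k k' : ℤ, k ≠ k' → Disjoint (Ann k) (Ann k') := by
    intro k k' hkk
    exact Disjoint.preimage (fun y => dist x y) (hIocDisj k k' hkk)
  -- the key annulus estimate
  have lemA : ∀ k : ℤ, ∫⁻ y in Ann k, g y ≤
      ENNReal.ofReal (D * a ((2:ℝ)^k * r) * ((2:ℝ)^k * r) ^ (-(n:ℝ))) *
        ∫⁻ y in Metric.ball x ((2:ℝ)^(k+2) * r), f y := by
    intro k
    have hs : (0:ℝ) < (2:ℝ)^k * r := hzr k
    have hsub : Ann k ⊆ Metric.ball x ((2:ℝ)^(k+2) * r) := by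
      intro y hy
      rw [Metric.mem_ball, dist_comm]
      calc dist x y ≤ (2:ℝ)^(k+1) * r := hy.2
        _ < (2:ℝ)^(k+2) * r := by
            have : (2:ℝ)^(k+1) < (2:ℝ)^(k+2) := zpow_lt_zpow_right₀ one_lt_two (by omega)
            nlinarith
    calc ∫⁻ y in Ann k, g y
        ≤ ∫⁻ y in Ann k, ENNReal.ofReal (D * a ((2:ℝ)^k * r) * ((2:ℝ)^k * r) ^ (-(n:ℝ))) * f y := by
          refine setLIntegral_mono' (hAnnMeas k) ?_
          intro y hy
          refine mul_le_mul_left (ENNReal.ofReal_le_ofReal ?_) _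
          have hy1 : (2:ℝ)^k * r < dist x y := hy.1
          have hy2 : dist x y ≤ (2:ℝ)^(k+1) * r := hy.2
          have hd0 : 0 < dist x y := lt_trans hs hy1
          have h21 : (2:ℝ)^(k+1) * r = 2 * ((2:ℝ)^k * r) := by
            rw [zpow_add_one₀ (two_ne_zero)]; ring
          have h1 : a (dist x y) ≤ D * a ((2:ℝ)^k * r) :=
            key1 _ _ hs hy1.le (by rw [← h21]; exact hy2)
          have h2 : dist x y ^ (-(n:ℝ)) ≤ ((2:ℝ)^k * r) ^ (-(n:ℝ)) :=
            Real.rpow_le_rpow_of_nonpos hs hy1.le (neg_nonpos.mpr hn0.le)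
          have h3 : 0 ≤ dist x y ^ (-(n:ℝ)) := Real.rpow_nonneg hd0.le _
          have h4 : 0 ≤ a (dist x y) := ha _ hd0
          have h5 : 0 ≤ D * a ((2:ℝ)^k * r) := mul_nonneg hD0.le (ha _ hs)
          exact mul_le_mul h1 h2 h3 h5
      _ = ENNReal.ofReal (D * a ((2:ℝ)^k * r) * ((2:ℝ)^k * r) ^ (-(n:ℝ))) *
            ∫⁻ y in Ann k, f y := lintegral_const_mul' _ _ ENNReal.ofReal_ne_top
      _ ≤ _ := mul_le_mul_right (lintegral_mono_set hsub) _
  -- decomposition of the domain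
  have hNearUnion : (⋃ j : ℕ, Ann (-(j:ℤ)-1)) = {y | dist x y ∈ Ioc 0 r} := by
    ext y
    simp only [mem_iUnion, hAnn_def, mem_setOf_eq, mem_Ioc]
    constructor
    · rintro ⟨j, hj⟩
      refine ⟨lt_trans (hzr _) hj.1, hj.2.trans ?_⟩
      have h1 : (-(j:ℤ)-1) + 1 ≤ 0 := by omega
      have h2 : (2:ℝ)^((-(j:ℤ)-1)+1) ≤ 1 := by
        calc (2:ℝ)^((-(j:ℤ)-1)+1) ≤ (2:ℝ)^(0:ℤ) := zpow_le_zpow_right₀ one_le_two h1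
          _ = 1 := zpow_zero 2
      nlinarith
    · rintro ⟨h0, h1⟩
      obtain ⟨k, hk⟩ := exists_mem_Ioc_zpow (x := dist x y / r) (by positivity) one_lt_two
      rw [mem_Ioc] at hk
      have hk1 : (2:ℝ)^k < 1 := lt_of_lt_of_le hk.1 ((div_le_one hr).mpr h1)
      have hkneg : k ≤ -1 := by
        by_contra hcon
        push_neg at hcon
        have : (2:ℝ)^(0:ℤ) ≤ (2:ℝ)^k := zpow_le_zpow_right₀ one_le_two (by omega)
        rw [zpow_zero] at this
        linarith
      refine ⟨(-k-1).toNat, ?_⟩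
      have htn : (((-k-1).toNat : ℤ)) = -k-1 := Int.toNat_of_nonneg (by omega)
      rw [htn, show -(-k-1)-1 = k from by ring]
      constructor
      · calc (2:ℝ)^k * r = (2:ℝ)^k * r := rfl
          _ < dist x y := by
              have := hk.1
              rw [lt_div_iff₀ hr] at this
              linarith
      · have := hk.2
        rw [div_le_iff₀ hr] at this
        linarith
  have hFarUnion : (⋃ j : ℕ, Ann (j:ℤ)) = {y | r < dist x y} := by
    ext y
    simp only [mem_iUnion, hAnn_def, mem_setOf_eq, mem_Ioc]
    constructor
    · rintro ⟨j, hj⟩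
      have h1 : (2:ℝ)^(0:ℤ) ≤ (2:ℝ)^(j:ℤ) := zpow_le_zpow_right₀ one_le_two (by omega)
      rw [zpow_zero] at h1
      nlinarith [hj.1]
    · intro h0
      have hd0 : 0 < dist x y := lt_trans hr h0
      obtain ⟨k, hk⟩ := exists_mem_Ioc_zpow (x := dist x y / r) (by positivity) one_lt_two
      rw [mem_Ioc] at hk
      have hk1 : (1:ℝ) < (2:ℝ)^(k+1) := lt_of_lt_of_le ((one_lt_div hr).mpr h0) hk.2
      have hkpos : 0 ≤ k := by
        by_contra hcon
        push_neg at hcon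
        have : (2:ℝ)^(k+1) ≤ (2:ℝ)^(0:ℤ) := zpow_le_zpow_right₀ one_le_two (by omega)
        rw [zpow_zero] at this
        linarith
      refine ⟨k.toNat, ?_⟩
      rw [Int.toNat_of_nonneg hkpos]
      constructor
      · have := hk.1
        rw [lt_div_iff₀ hr] at this
        linarith
      · have := hk.2
        rw [div_le_iff₀ hr] at this
        linarith
  have hxzero : ∫⁻ y in ({x} : Set (EuclideanSpace ℝ (Fin n))), g y = 0 := by
    have hgx : ∀ y ∈ ({x} : Set (EuclideanSpace ℝ (Fin n))), g y ≤ 0 := by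
      intro y hy
      rw [mem_singleton_iff] at hy
      have hdy : dist x y = 0 := by rw [hy, dist_self]
      have hne : (-(n:ℝ)) ≠ 0 := neg_ne_zero.mpr (Nat.cast_ne_zero.mpr (by omega))
      simp only [hg_def, hdy, Real.zero_rpow hne, mul_zero, ENNReal.ofReal_zero, zero_mul,
        le_refl]
    refine le_antisymm ?_ zero_le
    calc ∫⁻ y in ({x} : Set (EuclideanSpace ℝ (Fin n))), g y
        ≤ ∫⁻ _ in ({x} : Set (EuclideanSpace ℝ (Fin n))), 0 :=
          setLIntegral_mono' (measurableSet_singleton x) hgx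
      _ = 0 := by simp
  have hsplit : ∫⁻ y, g y ≤ (∑' j : ℕ, ∫⁻ y in Ann (-(j:ℤ)-1), g y)
      + ∑' j : ℕ, ∫⁻ y in Ann (j:ℤ), g y := by
    have huniv : (univ : Set (EuclideanSpace ℝ (Fin n))) =
        ({y | dist x y ∈ Ioc 0 r} ∪ {y | r < dist x y}) ∪ {x} := by
      ext y
      simp only [mem_univ, true_iff, mem_union, mem_setOf_eq, mem_singleton_iff, mem_Ioc]
      rcases eq_or_ne y x with rfl | hy
      · right; rfl
      · have hd0 : 0 < dist x y := dist_pos.mpr (Ne.symm hy)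
        rcases le_or_gt (dist x y) r with h | h
        · left; left; exact ⟨hd0, h⟩
        · left; right; exact h
    have hnd : Pairwise (Function.onFun Disjoint fun j : ℕ => Ann (-(j:ℤ)-1)) :=
      fun i j hij => hAnnDisj _ _ (by omega)
    have hfd : Pairwise (Function.onFun Disjoint fun j : ℕ => Ann (j:ℤ)) :=
      fun i j hij => hAnnDisj _ _ (by omega)
    calc ∫⁻ y, g y = ∫⁻ y in (univ : Set (EuclideanSpace ℝ (Fin n))), g y :=
          (setLIntegral_univ g).symm
      _ = ∫⁻ y in ({y | dist x y ∈ Ioc 0 r} ∪ {y | r < dist x y}) ∪ {x}, g y := by rw [← huniv]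
      _ ≤ (∫⁻ y in {y | dist x y ∈ Ioc 0 r} ∪ {y | r < dist x y}, g y)
            + ∫⁻ y in ({x} : Set (EuclideanSpace ℝ (Fin n))), g y := lintegral_union_le _ _ _
      _ = ∫⁻ y in {y | dist x y ∈ Ioc 0 r} ∪ {y | r < dist x y}, g y := by rw [hxzero, add_zero]
      _ ≤ (∫⁻ y in {y | dist x y ∈ Ioc 0 r}, g y) + ∫⁻ y in {y | r < dist x y}, g y :=
          lintegral_union_le _ _ _
      _ = (∫⁻ y in ⋃ j : ℕ, Ann (-(j:ℤ)-1), g y) + ∫⁻ y in ⋃ j : ℕ, Ann (j:ℤ), g y := by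
          rw [hNearUnion, hFarUnion]
      _ = _ := by
          rw [lintegral_iUnion (fun j => hAnnMeas _) hnd, lintegral_iUnion (fun j => hAnnMeas _) hfd]
  -- the near part
  have hnearterm : ∀ j : ℕ, ∫⁻ y in Ann (-(j:ℤ)-1), g y ≤
      (ENNReal.ofReal (D * 4^n) * ν * Mf) * ENNReal.ofReal (a ((2:ℝ)^(-(j:ℤ)-1) * r)) := by
    intro j
    have hs : (0:ℝ) < (2:ℝ)^(-(j:ℤ)-1) * r := hzr _
    have hRpos : (0:ℝ) < (2:ℝ)^((-(j:ℤ)-1)+2) * r := hzr _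
    have hof1 : (0:ℝ) ≤ D * a ((2:ℝ)^(-(j:ℤ)-1) * r) * ((2:ℝ)^(-(j:ℤ)-1) * r) ^ (-(n:ℝ)) := by
      have := ha _ hs
      have h2 : (0:ℝ) ≤ ((2:ℝ)^(-(j:ℤ)-1) * r) ^ (-(n:ℝ)) := Real.rpow_nonneg hs.le _
      positivity
    have hreal : (D * a ((2:ℝ)^(-(j:ℤ)-1) * r) * ((2:ℝ)^(-(j:ℤ)-1) * r) ^ (-(n:ℝ)))
        * (((2:ℝ)^((-(j:ℤ)-1)+2) * r) ^ n) = (D * 4^n) * a ((2:ℝ)^(-(j:ℤ)-1) * r) := by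
      have h42 : (2:ℝ)^((-(j:ℤ)-1)+2) * r = 4 * ((2:ℝ)^(-(j:ℤ)-1) * r) := by
        rw [zpow_add₀ (two_ne_zero) (-(j:ℤ)-1) 2]
        norm_num
        ring
      rw [h42, mul_pow]
      have hrpow : ((2:ℝ)^(-(j:ℤ)-1) * r) ^ (-(n:ℝ)) * ((2:ℝ)^(-(j:ℤ)-1) * r) ^ (n:ℕ) = 1 := by
        rw [← Real.rpow_natCast ((2:ℝ)^(-(j:ℤ)-1) * r) n, ← Real.rpow_add hs]
        norm_num
      calc (D * a ((2:ℝ)^(-(j:ℤ)-1) * r) * ((2:ℝ)^(-(j:ℤ)-1) * r) ^ (-(n:ℝ)))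
            * ((4:ℝ)^n * ((2:ℝ)^(-(j:ℤ)-1) * r) ^ n)
          = (D * 4^n) * a ((2:ℝ)^(-(j:ℤ)-1) * r)
            * (((2:ℝ)^(-(j:ℤ)-1) * r) ^ (-(n:ℝ)) * ((2:ℝ)^(-(j:ℤ)-1) * r) ^ (n:ℕ)) := by ring
        _ = (D * 4^n) * a ((2:ℝ)^(-(j:ℤ)-1) * r) := by rw [hrpow, mul_one]
    calc ∫⁻ y in Ann (-(j:ℤ)-1), g y
        ≤ ENNReal.ofReal (D * a ((2:ℝ)^(-(j:ℤ)-1) * r) * ((2:ℝ)^(-(j:ℤ)-1) * r) ^ (-(n:ℝ))) *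
            ∫⁻ y in Metric.ball x ((2:ℝ)^((-(j:ℤ)-1)+2) * r), f y := lemA _
      _ ≤ ENNReal.ofReal (D * a ((2:ℝ)^(-(j:ℤ)-1) * r) * ((2:ℝ)^(-(j:ℤ)-1) * r) ^ (-(n:ℝ))) *
            (volume (Metric.ball x ((2:ℝ)^((-(j:ℤ)-1)+2) * r)) * Mf) :=
          mul_le_mul_right (lintegral_ball_le_maximal n f x hRpos) _
      _ = ENNReal.ofReal (D * a ((2:ℝ)^(-(j:ℤ)-1) * r) * ((2:ℝ)^(-(j:ℤ)-1) * r) ^ (-(n:ℝ))) *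
            (ENNReal.ofReal (((2:ℝ)^((-(j:ℤ)-1)+2) * r) ^ n) * ν * Mf) := by
          rw [hballvol _ hRpos]
      _ = (ENNReal.ofReal (D * a ((2:ℝ)^(-(j:ℤ)-1) * r) * ((2:ℝ)^(-(j:ℤ)-1) * r) ^ (-(n:ℝ))) *
            ENNReal.ofReal (((2:ℝ)^((-(j:ℤ)-1)+2) * r) ^ n)) * ν * Mf := by ring
      _ = ENNReal.ofReal ((D * a ((2:ℝ)^(-(j:ℤ)-1) * r) * ((2:ℝ)^(-(j:ℤ)-1) * r) ^ (-(n:ℝ))) *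
            (((2:ℝ)^((-(j:ℤ)-1)+2) * r) ^ n)) * ν * Mf := by
          rw [ENNReal.ofReal_mul hof1]
      _ = ENNReal.ofReal ((D * 4^n) * a ((2:ℝ)^(-(j:ℤ)-1) * r)) * ν * Mf := by rw [hreal]
      _ = (ENNReal.ofReal (D * 4^n) * ENNReal.ofReal (a ((2:ℝ)^(-(j:ℤ)-1) * r))) * ν * Mf := by
          rw [ENNReal.ofReal_mul (by positivity)]
      _ = (ENNReal.ofReal (D * 4^n) * ν * Mf) * ENNReal.ofReal (a ((2:ℝ)^(-(j:ℤ)-1) * r)) := by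
          ring
  have hasum : (∑' j : ℕ, ENNReal.ofReal (a ((2:ℝ)^(-(j:ℤ)-1) * r))) ≤ ENNReal.ofReal (2*D) * A := by
    have hIocEq : ∀ j : ℕ, Ioc (((2:ℝ)^(-(j:ℤ)-1) * r)/2) ((2:ℝ)^(-(j:ℤ)-1) * r)
        = Ioc ((2:ℝ)^(-(j:ℤ)-2) * r) ((2:ℝ)^((-(j:ℤ)-2)+1) * r) := by
      intro j
      have e1 : (2:ℝ)^(-(j:ℤ)-1) = (2:ℝ)^(-(j:ℤ)-2) * 2 := by
        rw [← zpow_add_one₀ (two_ne_zero : (2:ℝ) ≠ 0) (-(j:ℤ)-2)]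
        congr 1
        ring
      have e2 : ((2:ℝ)^(-(j:ℤ)-1) * r)/2 = (2:ℝ)^(-(j:ℤ)-2) * r := by rw [e1]; ring
      have e3 : (2:ℝ)^(-(j:ℤ)-1) * r = (2:ℝ)^((-(j:ℤ)-2)+1) * r := by
        congr 1
        congr 1
        ring
      rw [e2, e3]
    have h1 : ∀ j : ℕ, ENNReal.ofReal (a ((2:ℝ)^(-(j:ℤ)-1) * r)) ≤
        ENNReal.ofReal (2*D) *
          ∫⁻ t in Ioc ((2:ℝ)^(-(j:ℤ)-2) * r) ((2:ℝ)^((-(j:ℤ)-2)+1) * r), ENNReal.ofReal (a t / t) := by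
      intro j
      have := keyA ((2:ℝ)^(-(j:ℤ)-1) * r) (hzr _)
      rwa [hIocEq j] at this
    have hdisj : Pairwise (Function.onFun Disjoint
        fun j : ℕ => Ioc ((2:ℝ)^(-(j:ℤ)-2) * r) ((2:ℝ)^((-(j:ℤ)-2)+1) * r)) :=
      fun i j hij => hIocDisj _ _ (by omega)
    have hsub2 : (⋃ j : ℕ, Ioc ((2:ℝ)^(-(j:ℤ)-2) * r) ((2:ℝ)^((-(j:ℤ)-2)+1) * r)) ⊆ Ioc 0 r := by
      refine iUnion_subset fun j => ?_
      intro t ht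
      refine ⟨lt_trans (hzr _) ht.1, ht.2.trans ?_⟩
      have h2 : (2:ℝ)^((-(j:ℤ)-2)+1) ≤ 1 := by
        calc (2:ℝ)^((-(j:ℤ)-2)+1) ≤ (2:ℝ)^(0:ℤ) := zpow_le_zpow_right₀ one_le_two (by omega)
          _ = 1 := zpow_zero 2
      nlinarith
    calc ∑' j : ℕ, ENNReal.ofReal (a ((2:ℝ)^(-(j:ℤ)-1) * r))
        ≤ ∑' j : ℕ, ENNReal.ofReal (2*D) *
            ∫⁻ t in Ioc ((2:ℝ)^(-(j:ℤ)-2) * r) ((2:ℝ)^((-(j:ℤ)-2)+1) * r), ENNReal.ofReal (a t / t) :=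
          ENNReal.tsum_le_tsum h1
      _ = ENNReal.ofReal (2*D) * ∑' j : ℕ,
            ∫⁻ t in Ioc ((2:ℝ)^(-(j:ℤ)-2) * r) ((2:ℝ)^((-(j:ℤ)-2)+1) * r), ENNReal.ofReal (a t / t) :=
          ENNReal.tsum_mul_left
      _ = ENNReal.ofReal (2*D) *
            ∫⁻ t in ⋃ j : ℕ, Ioc ((2:ℝ)^(-(j:ℤ)-2) * r) ((2:ℝ)^((-(j:ℤ)-2)+1) * r),
              ENNReal.ofReal (a t / t) := by
          rw [lintegral_iUnion (fun j => measurableSet_Ioc) hdisj]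
      _ ≤ ENNReal.ofReal (2*D) * A := mul_le_mul_right (lintegral_mono_set hsub2) _
  have hnear : (∑' j : ℕ, ∫⁻ y in Ann (-(j:ℤ)-1), g y) ≤
      (ENNReal.ofReal (2*D^2*4^n) * ν) * Mf * A := by
    calc ∑' j : ℕ, ∫⁻ y in Ann (-(j:ℤ)-1), g y
        ≤ ∑' j : ℕ, (ENNReal.ofReal (D * 4^n) * ν * Mf) * ENNReal.ofReal (a ((2:ℝ)^(-(j:ℤ)-1) * r)) :=
          ENNReal.tsum_le_tsum hnearterm
      _ = (ENNReal.ofReal (D * 4^n) * ν * Mf) * ∑' j : ℕ, ENNReal.ofReal (a ((2:ℝ)^(-(j:ℤ)-1) * r)) :=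
          ENNReal.tsum_mul_left
      _ ≤ (ENNReal.ofReal (D * 4^n) * ν * Mf) * (ENNReal.ofReal (2*D) * A) :=
          mul_le_mul_right hasum _
      _ = (ENNReal.ofReal (D * 4^n) * ENNReal.ofReal (2*D) * ν) * Mf * A := by ring
      _ = (ENNReal.ofReal (2*D^2*4^n) * ν) * Mf * A := by
          rw [← ENNReal.ofReal_mul (by positivity)]
          congr 2
          ring
  -- the far part
  have hqe : -(n:ℝ) + (n:ℝ)*(1/q) = -(n:ℝ)/p := by
    have h1 : p - 1 ≠ 0 := sub_ne_zero.mpr hp.ne'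
    rw [(Real.holderConjugate_iff_eq_conjExponent hp).mp hpq]
    field_simp
    ring
  have hfarterm : ∀ j : ℕ, ∫⁻ y in Ann (j:ℤ), g y ≤
      (ENNReal.ofReal (D^2 * 4^((n:ℝ)/q) * (a r * r ^ (-(n:ℝ)/p))) * ν^((1:ℝ)/q)) *
        ENNReal.ofReal θ ^ j := by
    intro j
    have hu0 : (0:ℝ) < (2:ℝ)^(j:ℤ) * r := hzr _
    have hR0 : (0:ℝ) < (2:ℝ)^((j:ℤ)+2) * r := hzr _
    have hz : (2:ℝ)^(j:ℤ) = (2:ℝ)^((j:ℝ)) := by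
      rw [zpow_natCast, ← Real.rpow_natCast]
    have hur : ((2:ℝ)^(j:ℤ) * r)/r = (2:ℝ)^(j:ℤ) := by field_simp
    have hau : a ((2:ℝ)^(j:ℤ) * r) ≤ D * (2:ℝ)^((j:ℝ)*lam) * a r := by
      have h1 : (1:ℝ) ≤ (2:ℝ)^(j:ℤ) := by
        calc (1:ℝ) = (2:ℝ)^(0:ℤ) := (zpow_zero 2).symm
          _ ≤ (2:ℝ)^(j:ℤ) := zpow_le_zpow_right₀ one_le_two (by omega)
      have h2 := key2 r ((2:ℝ)^(j:ℤ) * r) hr (by nlinarith)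
      have h3 : ((2:ℝ)^(j:ℤ)) ^ lam = (2:ℝ)^((j:ℝ)*lam) := by
        rw [hz, ← Real.rpow_mul (by norm_num : (0:ℝ) ≤ 2)]
      rw [hur, h3] at h2
      exact h2
    have hX : ((2:ℝ)^(j:ℤ) * r) ^ (-(n:ℝ)) * (((2:ℝ)^((j:ℤ)+2) * r) ^ n) ^ ((1:ℝ)/q)
        = 4^((n:ℝ)/q) * ((2:ℝ)^((j:ℝ)*(-(n:ℝ)/p)) * r ^ (-(n:ℝ)/p)) := by
      have h42 : (2:ℝ)^((j:ℤ)+2) * r = 4 * ((2:ℝ)^(j:ℤ) * r) := by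
        rw [zpow_add₀ (two_ne_zero : (2:ℝ) ≠ 0) (j:ℤ) 2]
        norm_num
        ring
      rw [h42]
      rw [← Real.rpow_natCast (4 * ((2:ℝ)^(j:ℤ) * r)) n]
      rw [← Real.rpow_mul (by positivity)]
      rw [Real.mul_rpow (by norm_num : (0:ℝ) ≤ 4) hu0.le]
      rw [show ((2:ℝ)^(j:ℤ) * r) ^ (-(n:ℝ)) *
            ((4:ℝ) ^ ((n:ℝ)*(1/q)) * ((2:ℝ)^(j:ℤ) * r) ^ ((n:ℝ)*(1/q)))
          = (4:ℝ) ^ ((n:ℝ)*(1/q)) *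
            (((2:ℝ)^(j:ℤ) * r) ^ (-(n:ℝ)) * ((2:ℝ)^(j:ℤ) * r) ^ ((n:ℝ)*(1/q))) from by ring]
      rw [← Real.rpow_add hu0, hqe]
      rw [Real.mul_rpow (by positivity) hr.le, hz,
        ← Real.rpow_mul (by norm_num : (0:ℝ) ≤ 2)]
      rw [show (n:ℝ)*(1/q) = (n:ℝ)/q from by ring]
    have hof0 : (0:ℝ) ≤ D * a ((2:ℝ)^(j:ℤ) * r) * (((2:ℝ)^(j:ℤ) * r) ^ (-(n:ℝ))) :=
      mul_nonneg (mul_nonneg hD0.le (ha _ hu0)) (Real.rpow_nonneg hu0.le _)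
    have har : (0:ℝ) ≤ a r := ha r hr
    have hrp : (0:ℝ) ≤ r^(-(n:ℝ)/p) := Real.rpow_nonneg hr.le _
    have hcn : (0:ℝ) ≤ D^2 * 4^((n:ℝ)/q) * (a r * r^(-(n:ℝ)/p)) :=
      mul_nonneg (mul_nonneg (pow_nonneg hD0.le 2) (Real.rpow_nonneg (by norm_num) _))
        (mul_nonneg har hrp)
    calc ∫⁻ y in Ann (j:ℤ), g y
        ≤ ENNReal.ofReal (D * a ((2:ℝ)^(j:ℤ) * r) * (((2:ℝ)^(j:ℤ) * r) ^ (-(n:ℝ)))) *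
            ∫⁻ y in Metric.ball x ((2:ℝ)^((j:ℤ)+2) * r), f y := lemA _
      _ ≤ ENNReal.ofReal (D * a ((2:ℝ)^(j:ℤ) * r) * (((2:ℝ)^(j:ℤ) * r) ^ (-(n:ℝ)))) *
            (volume (Metric.ball x ((2:ℝ)^((j:ℤ)+2) * r))) ^ ((1:ℝ)/q) :=
          mul_le_mul_right (lintegral_set_le_pow n hpq f hfm hf1 _) _
      _ = ENNReal.ofReal (D * a ((2:ℝ)^(j:ℤ) * r) * (((2:ℝ)^(j:ℤ) * r) ^ (-(n:ℝ)))) *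
            (ENNReal.ofReal ((((2:ℝ)^((j:ℤ)+2) * r) ^ n)) * ν) ^ ((1:ℝ)/q) := by
          rw [hballvol _ hR0]
      _ = ENNReal.ofReal (D * a ((2:ℝ)^(j:ℤ) * r) * (((2:ℝ)^(j:ℤ) * r) ^ (-(n:ℝ)))) *
            (ENNReal.ofReal ((((2:ℝ)^((j:ℤ)+2) * r) ^ n) ^ ((1:ℝ)/q)) * ν ^ ((1:ℝ)/q)) := by
          rw [ENNReal.mul_rpow_of_nonneg _ _ (by positivity),
            ENNReal.ofReal_rpow_of_pos (by positivity)]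
      _ = ENNReal.ofReal ((D * a ((2:ℝ)^(j:ℤ) * r) * (((2:ℝ)^(j:ℤ) * r) ^ (-(n:ℝ)))) *
            ((((2:ℝ)^((j:ℤ)+2) * r) ^ n) ^ ((1:ℝ)/q))) * ν ^ ((1:ℝ)/q) := by
          rw [ENNReal.ofReal_mul hof0]
          ring
      _ ≤ ENNReal.ofReal ((D^2 * 4^((n:ℝ)/q) * (a r * r^(-(n:ℝ)/p))) * θ^j) * ν ^ ((1:ℝ)/q) := by
          refine mul_le_mul_left (ENNReal.ofReal_le_ofReal ?_) _
          rw [mul_assoc, hX]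
          have hθj : (2:ℝ)^((j:ℝ)*lam) * (2:ℝ)^((j:ℝ)*(-(n:ℝ)/p)) = θ^j := by
            rw [← Real.rpow_add two_pos, hθ_def,
              ← Real.rpow_natCast ((2:ℝ) ^ (lam - (n:ℝ)/p)) j,
              ← Real.rpow_mul (by norm_num : (0:ℝ) ≤ 2)]
            congr 1
            ring
          have hfac : (0:ℝ) ≤ 4^((n:ℝ)/q) * ((2:ℝ)^((j:ℝ)*(-(n:ℝ)/p)) * r ^ (-(n:ℝ)/p)) := by
            positivity
          calc D * a ((2:ℝ)^(j:ℤ) * r) *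
                (4^((n:ℝ)/q) * ((2:ℝ)^((j:ℝ)*(-(n:ℝ)/p)) * r ^ (-(n:ℝ)/p)))
              ≤ D * (D * (2:ℝ)^((j:ℝ)*lam) * a r) *
                (4^((n:ℝ)/q) * ((2:ℝ)^((j:ℝ)*(-(n:ℝ)/p)) * r ^ (-(n:ℝ)/p))) :=
              mul_le_mul_of_nonneg_right (mul_le_mul_of_nonneg_left hau hD0.le) hfac
            _ = (D^2 * 4^((n:ℝ)/q) * (a r * r^(-(n:ℝ)/p))) *
                ((2:ℝ)^((j:ℝ)*lam) * (2:ℝ)^((j:ℝ)*(-(n:ℝ)/p))) := by ring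
            _ = (D^2 * 4^((n:ℝ)/q) * (a r * r^(-(n:ℝ)/p))) * θ^j := by rw [hθj]
      _ = (ENNReal.ofReal (D^2 * 4^((n:ℝ)/q) * (a r * r^(-(n:ℝ)/p))) * ν^((1:ℝ)/q)) *
            ENNReal.ofReal θ ^ j := by
          rw [ENNReal.ofReal_mul hcn, ← ENNReal.ofReal_pow hθ0.le]
          ring
  have hfar : (∑' j : ℕ, ∫⁻ y in Ann (j:ℤ), g y) ≤
      (ENNReal.ofReal (2*D^3*4^((n:ℝ)/q)) * ν^((1:ℝ)/q) * G) * ENNReal.ofReal (r ^ (-(n:ℝ)/p)) * A := by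
    have har : (0:ℝ) ≤ a r := ha r hr
    have hsubr : Ioc (r/2) r ⊆ Ioc (0:ℝ) r := fun t ht => ⟨lt_trans (by linarith) ht.1, ht.2⟩
    calc ∑' j : ℕ, ∫⁻ y in Ann (j:ℤ), g y
        ≤ ∑' j : ℕ, (ENNReal.ofReal (D^2 * 4^((n:ℝ)/q) * (a r * r^(-(n:ℝ)/p))) * ν^((1:ℝ)/q)) *
            ENNReal.ofReal θ ^ j := ENNReal.tsum_le_tsum hfarterm
      _ = (ENNReal.ofReal (D^2 * 4^((n:ℝ)/q) * (a r * r^(-(n:ℝ)/p))) * ν^((1:ℝ)/q)) *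
            ∑' j : ℕ, ENNReal.ofReal θ ^ j := ENNReal.tsum_mul_left
      _ = (ENNReal.ofReal (D^2 * 4^((n:ℝ)/q) * (a r * r^(-(n:ℝ)/p))) * ν^((1:ℝ)/q)) * G := by
          rw [ENNReal.tsum_geometric]
      _ = (ENNReal.ofReal (D^2 * 4^((n:ℝ)/q)) * ν^((1:ℝ)/q) * G * ENNReal.ofReal (r^(-(n:ℝ)/p))) *
            ENNReal.ofReal (a r) := by
          rw [ENNReal.ofReal_mul (mul_nonneg (pow_nonneg hD0.le 2)
            (Real.rpow_nonneg (by norm_num) _)), ENNReal.ofReal_mul har]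
          ring
      _ ≤ (ENNReal.ofReal (D^2 * 4^((n:ℝ)/q)) * ν^((1:ℝ)/q) * G * ENNReal.ofReal (r^(-(n:ℝ)/p))) *
            (ENNReal.ofReal (2*D) * A) := by
          refine mul_le_mul_right ((keyA r hr).trans ?_) _
          exact mul_le_mul_right (lintegral_mono_set hsubr) _
      _ = (ENNReal.ofReal (D^2 * 4^((n:ℝ)/q)) * ENNReal.ofReal (2*D) * ν^((1:ℝ)/q) * G) *
            ENNReal.ofReal (r^(-(n:ℝ)/p)) * A := by ring
      _ = (ENNReal.ofReal (2*D^3*4^((n:ℝ)/q)) * ν^((1:ℝ)/q) * G) *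
            ENNReal.ofReal (r^(-(n:ℝ)/p)) * A := by
          rw [← ENNReal.ofReal_mul (mul_nonneg (pow_nonneg hD0.le 2)
            (Real.rpow_nonneg (by norm_num) _))]
          congr 3
          ring
  -- final assembly
  have hXn : ENNReal.ofReal (2*D^2*4^n) * ν ≠ ⊤ := ENNReal.mul_ne_top ENNReal.ofReal_ne_top hνt
  have hXf : ENNReal.ofReal (2*D^3*4^((n:ℝ)/q)) * ν^((1:ℝ)/q) * G ≠ ⊤ :=
    ENNReal.mul_ne_top (ENNReal.mul_ne_top ENNReal.ofReal_ne_top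
      (ENNReal.rpow_ne_top_of_nonneg (by positivity) hνt)) hGt
  have hKnear : ENNReal.ofReal (2*D^2*4^n) * ν ≤ ENNReal.ofReal K := by
    conv_lhs => rw [← ENNReal.ofReal_toReal hXn]
    apply ENNReal.ofReal_le_ofReal
    have h2 := ENNReal.toReal_nonneg
      (a := ENNReal.ofReal (2*D^3*4^((n:ℝ)/q)) * ν^((1:ℝ)/q) * G)
    rw [hK_def]
    have e1 : ν ^ (1/q) = ν ^ ((1:ℝ)/q) := rfl
    rw [e1]
    linarith
  have hKfar : ENNReal.ofReal (2*D^3*4^((n:ℝ)/q)) * ν^((1:ℝ)/q) * G ≤ ENNReal.ofReal K := by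
    conv_lhs => rw [← ENNReal.ofReal_toReal hXf]
    apply ENNReal.ofReal_le_ofReal
    have h2 := ENNReal.toReal_nonneg (a := ENNReal.ofReal (2*D^2*4^n) * ν)
    rw [hK_def]
    have e1 : ν ^ (1/q) = ν ^ ((1:ℝ)/q) := rfl
    rw [e1]
    linarith
  have hre : r ^ (-(n:ℝ)/p) = r ^ (-(n:ℝ) / p) := rfl
  calc ∫⁻ y, g y
      ≤ (∑' j : ℕ, ∫⁻ y in Ann (-(j:ℤ)-1), g y) + ∑' j : ℕ, ∫⁻ y in Ann (j:ℤ), g y := hsplit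
    _ ≤ (ENNReal.ofReal (2*D^2*4^n) * ν) * Mf * A +
          (ENNReal.ofReal (2*D^3*4^((n:ℝ)/q)) * ν^((1:ℝ)/q) * G) *
            ENNReal.ofReal (r ^ (-(n:ℝ)/p)) * A := add_le_add hnear hfar
    _ ≤ ENNReal.ofReal K * Mf * A + ENNReal.ofReal K * ENNReal.ofReal (r ^ (-(n:ℝ)/p)) * A :=
        add_le_add (mul_le_mul_left (mul_le_mul_left hKnear Mf) A)
          (mul_le_mul_left (mul_le_mul_left hKfar _) A)
    _ = ENNReal.ofReal K * (Mf + ENNReal.ofReal (r ^ (-(n:ℝ) / p))) * A := by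
        rw [← hre]
        ring
end

section
/- Let n ≥ 1, 1 < p < ∞, p′ = p/(p−1), and let a : (0,∞) → [0,∞) be almost increasing such that a(t)/t^λ is almost decreasing for some 0 < λ < n/p and ∫₀^1 a(t)/t dt < ∞. Set A(r) = ∫₀^r a(t)/t dt and I_a f(x) = ∫_{ℝⁿ} a(|x−y|) · |x−y|^{−n} · f(y) dy. Then there exists a constant C > 0 such that for every measurable f : ℝⁿ → [0,∞) with ‖f‖_{L^p(ℝⁿ)} ≤ 1 and every x ∈ ℝⁿ with 0 < Mf(x) < ∞, I_a f(x) ≤ C · ∫₀^{(Mf(x))^p} A(t^{−1/n}) · t^{−1/p′} dt, where Mf(x) = sup_{ρ>0} (1/|B(x,ρ)|) ∫_{B(x,ρ)} f(y) dy is the Hardy–Littlewood maximal function. -/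
open MeasureTheory Set
open scoped ENNReal

lemma exists_near_index {δ t : ℝ} (hδ : 0 < δ) (ht : 0 < t) (htδ : t ≤ δ) :
    ∃ j : ℕ, δ * 2 ^ (-(j:ℤ) - 1) < t ∧ t ≤ δ * 2 ^ (-(j:ℤ)) := by
  obtain ⟨m, hm1, hm2⟩ := exists_mem_Ioc_zpow (x := t/δ) (y := (2:ℝ)) (div_pos ht hδ) one_lt_two
  have hm0 : m + 1 ≤ 0 := by
    by_contra h
    push_neg at h
    have h1 : (1:ℝ) ≤ (2:ℝ) ^ m := one_le_zpow₀ one_le_two (by omega)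
    have : t / δ ≤ 1 := (div_le_one hδ).2 htδ
    linarith
  refine ⟨(-(m+1)).toNat, ?_, ?_⟩
  · have hcast : (-(((-(m+1)).toNat : ℤ))) - 1 = m := by omega
    rw [hcast]
    calc δ * 2 ^ m < δ * (t/δ) := mul_lt_mul_of_pos_left hm1 hδ
      _ = t := by field_simp
  · have hcast : (-(((-(m+1)).toNat : ℤ))) = m + 1 := by omega
    rw [hcast]
    calc t = δ * (t/δ) := by field_simp
      _ ≤ δ * 2 ^ (m+1) := mul_le_mul_of_nonneg_left hm2 hδ.le

lemma exists_far_index {δ t : ℝ} (hδ : 0 < δ) (ht : δ < t) :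
    ∃ j : ℕ, δ * 2 ^ (j:ℤ) < t ∧ t ≤ δ * 2 ^ ((j:ℤ) + 1) := by
  obtain ⟨m, hm1, hm2⟩ := exists_mem_Ioc_zpow (x := t/δ) (y := (2:ℝ))
    (div_pos (hδ.trans ht) hδ) one_lt_two
  have hm0 : 0 ≤ m := by
    by_contra h
    push_neg at h
    have h1 : (2:ℝ) ^ (m+1) ≤ 1 := zpow_le_one_of_nonpos₀ one_le_two (by omega)
    have : (1:ℝ) < t / δ := (one_lt_div hδ).2 ht
    linarith
  refine ⟨m.toNat, ?_, ?_⟩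
  · rw [Int.toNat_of_nonneg hm0]
    calc δ * 2 ^ m < δ * (t/δ) := mul_lt_mul_of_pos_left hm1 hδ
      _ = t := by field_simp
  · rw [Int.toNat_of_nonneg hm0]
    calc t = δ * (t/δ) := by field_simp
      _ ≤ δ * 2 ^ (m+1) := mul_le_mul_of_nonneg_left hm2 hδ.le

lemma pairwise_disjoint_Ioc_antitone {g : ℕ → ℝ} (hg : Antitone g) :
    Pairwise (Function.onFun Disjoint fun j => Set.Ioc (g (j+1)) (g j)) := by
  intro i j hne
  rcases hne.lt_or_gt with h | h
  · rw [Function.onFun, Set.Ioc_disjoint_Ioc]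
    exact le_trans (le_trans (min_le_right _ _) (hg (by omega))) (le_max_left _ _)
  · rw [Function.onFun, Set.Ioc_disjoint_Ioc]
    exact le_trans (le_trans (min_le_left _ _) (hg (by omega))) (le_max_right _ _)

lemma pairwise_disjoint_Ioc_monotone {g : ℕ → ℝ} (hg : Monotone g) :
    Pairwise (Function.onFun Disjoint fun j => Set.Ioc (g j) (g (j+1))) := by
  intro i j hne
  rcases hne.lt_or_gt with h | h
  · rw [Function.onFun, Set.Ioc_disjoint_Ioc]
    exact le_trans (le_trans (min_le_left _ _) (hg (by omega))) (le_max_right _ _)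
  · rw [Function.onFun, Set.Ioc_disjoint_Ioc]
    exact le_trans (le_trans (min_le_right _ _) (hg (by omega))) (le_max_left _ _)

lemma key_lower (a : ℝ → ℝ) (lam Cd : ℝ) (hlam0 : 0 < lam) (hCd0 : 0 < Cd)
    (ha : ∀ t : ℝ, 0 < t → 0 ≤ a t)
    (hCd : ∀ t₁ t₂ : ℝ, 0 < t₁ → t₁ ≤ t₂ → a t₂ / t₂ ^ lam ≤ Cd * (a t₁ / t₁ ^ lam))
    {r : ℝ} (hr : 0 < r) :
    ENNReal.ofReal (a r) ≤ ENNReal.ofReal (Cd * 2^lam * 2) *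
      ∫⁻ t in Ioc (r/2) r, ENNReal.ofReal (a t / t) := by
  have h2l : (0:ℝ) < (2:ℝ)^lam := Real.rpow_pos_of_pos two_pos lam
  set q : ℝ := (1/2:ℝ)^lam / Cd with hq
  have hq12 : (0:ℝ) < (1/2:ℝ)^lam := Real.rpow_pos_of_pos (by norm_num) lam
  have hq0 : 0 < q := div_pos hq12 hCd0
  have hpoint : ∀ t ∈ Ioc (r/2) r, ENNReal.ofReal (q * a r / r) ≤ ENNReal.ofReal (a t / t) := by
    intro t ht
    obtain ⟨ht1, ht2⟩ := ht
    have ht0 : 0 < t := lt_trans (by positivity) ht1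
    apply ENNReal.ofReal_le_ofReal
    have hrl : (0:ℝ) < r ^ lam := Real.rpow_pos_of_pos hr lam
    have htl : (0:ℝ) < t ^ lam := Real.rpow_pos_of_pos ht0 lam
    have h1 : a r / r^lam ≤ Cd * (a t / t^lam) := hCd t r ht0 ht2
    rw [mul_div_assoc'] at h1
    rw [div_le_div_iff₀ hrl htl] at h1
    have h2 : q * a r ≤ a t := by
      have hq' : (1/2:ℝ)^lam ≤ (t/r)^lam := by
        apply Real.rpow_le_rpow (by norm_num) _ hlam0.le
        rw [le_div_iff₀ hr]; linarith
      have htr : (t/r)^lam = t^lam / r^lam := Real.div_rpow ht0.le hr.le lam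
      have h3 : (t/r)^lam * a r ≤ Cd * a t := by
        rw [htr, div_mul_eq_mul_div, div_le_iff₀ hrl]
        nlinarith [h1]
      have h4 : (1/2:ℝ)^lam * a r ≤ Cd * a t := by
        nlinarith [ha r hr, hq']
      rw [hq]
      rw [div_mul_eq_mul_div, div_le_iff₀ hCd0]
      nlinarith [h4]
    exact div_le_div₀ (ha t ht0) h2 ht0 ht2
  calc ENNReal.ofReal (a r)
      = ENNReal.ofReal (Cd * 2^lam * 2) * ENNReal.ofReal (q * a r / r * (r/2)) := by
        rw [← ENNReal.ofReal_mul (by positivity)]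
        congr 1
        have h12 : (1/2:ℝ)^lam = ((2:ℝ)^lam)⁻¹ := by
          rw [one_div, Real.inv_rpow (by norm_num : (0:ℝ) ≤ 2)]
        rw [hq, h12]
        field_simp
    _ ≤ ENNReal.ofReal (Cd * 2^lam * 2) * ∫⁻ t in Ioc (r/2) r, ENNReal.ofReal (a t / t) := by
        gcongr
        calc ENNReal.ofReal (q * a r / r * (r/2))
            = ENNReal.ofReal (q * a r / r) * ENNReal.ofReal (r/2) := by
              rw [← ENNReal.ofReal_mul (div_nonneg (mul_nonneg hq0.le (ha r hr)) hr.le)]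
          _ = ENNReal.ofReal (q * a r / r) * volume (Ioc (r/2) r) := by
              rw [Real.volume_Ioc]; congr 1; ring
          _ = ∫⁻ _ in Ioc (r/2) r, ENNReal.ofReal (q * a r / r) := (setLIntegral_const _ _).symm
          _ ≤ ∫⁻ t in Ioc (r/2) r, ENNReal.ofReal (a t / t) :=
              setLIntegral_mono' measurableSet_Ioc hpoint

lemma holder_bound {α : Type*} [MeasurableSpace α] (μ : Measure α) {p p' : ℝ}
    (hpq : p.HolderConjugate p') {f : α → ℝ≥0∞} (hf : Measurable f)
    (hnorm : (∫⁻ y, f y ^ p ∂μ) ^ (1/p) ≤ 1) (s : Set α) :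
    ∫⁻ y in s, f y ∂μ ≤ (μ s) ^ (1/p') := by
  have h := ENNReal.lintegral_mul_le_Lp_mul_Lq (μ.restrict s) hpq hf.aemeasurable
      (aemeasurable_const (b := (1:ℝ≥0∞)))
  simp only [Pi.mul_apply, mul_one, ENNReal.one_rpow, lintegral_one,
    Measure.restrict_apply MeasurableSet.univ, univ_inter] at h
  calc ∫⁻ y in s, f y ∂μ ≤ (∫⁻ y in s, f y ^ p ∂μ)^(1/p) * (μ s)^(1/p') := h
    _ ≤ 1 * (μ s)^(1/p') := by
        have h10 : (0:ℝ) ≤ 1/p := (one_div_pos.mpr hpq.pos).le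
        gcongr
        exact le_trans (ENNReal.rpow_le_rpow (setLIntegral_le_lintegral s _) h10) hnorm
    _ = (μ s)^(1/p') := one_mul _

set_option maxHeartbeats 2000000 in
/-- Pointwise Orlicz-type estimate for the generalized potential: with
`A(r) = ∫₀^r a(t)/t dt`, for `‖f‖_{L^p} ≤ 1` and `0 < Mf(x) < ∞`,
`I_a f(x) ≤ C ∫₀^{(Mf(x))^p} A(t^{-1/n}) t^{-1/p'} dt`. -/
theorem potential_le_orlicz_integral
    (n : ℕ) (hn : 1 ≤ n) (p p' : ℝ) (hp : 1 < p) (hp' : p' = p / (p - 1))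
    (a : ℝ → ℝ) (ha : ∀ t : ℝ, 0 < t → 0 ≤ a t)
    (hinc : ∃ C > (0 : ℝ), ∀ t₁ t₂ : ℝ, 0 < t₁ → t₁ < t₂ → a t₁ ≤ C * a t₂)
    (lam : ℝ) (hlam0 : 0 < lam) (hlamnp : lam < n / p)
    (hdec : ∃ C > (0 : ℝ), ∀ t₁ t₂ : ℝ, 0 < t₁ → t₁ < t₂ →
      a t₂ / t₂ ^ lam ≤ C * (a t₁ / t₁ ^ lam))
    (hfin : (∫⁻ t in Ioc (0 : ℝ) 1, ENNReal.ofReal (a t / t)) < ⊤) :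
    ∃ C > (0 : ℝ), ∀ f : EuclideanSpace ℝ (Fin n) → ℝ≥0∞, Measurable f →
      (∫⁻ y, f y ^ p) ^ (1 / p) ≤ 1 →
      ∀ x : EuclideanSpace ℝ (Fin n), 0 < maximalFn n f x → maximalFn n f x < ⊤ →
        (∫⁻ y, ENNReal.ofReal (a (dist x y) * dist x y ^ (-(n : ℝ))) * f y) ≤
          ENNReal.ofReal C *
            ∫⁻ t in Ioo (0 : ℝ) ((maximalFn n f x).toReal ^ p),
              (∫⁻ s in Ioc (0 : ℝ) (t ^ (-1 / (n : ℝ))), ENNReal.ofReal (a s / s)) *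
                ENNReal.ofReal (t ^ (-1 / p')) := by
  obtain ⟨Ci₀, hCi₀, hinc'⟩ := hinc
  obtain ⟨Cd₀, hCd₀, hdec'⟩ := hdec
  set Ci : ℝ := max Ci₀ 1 with hCidef
  set Cd : ℝ := max Cd₀ 1 with hCddef
  have hCi0 : 0 < Ci := lt_of_lt_of_le one_pos (le_max_right _ _)
  have hCd0 : 0 < Cd := lt_of_lt_of_le one_pos (le_max_right _ _)
  have hCi : ∀ t₁ t₂ : ℝ, 0 < t₁ → t₁ ≤ t₂ → a t₁ ≤ Ci * a t₂ := by
    intro t₁ t₂ h0 h12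
    rcases eq_or_lt_of_le h12 with rfl | h
    · nlinarith [ha t₁ h0, le_max_right Ci₀ (1:ℝ)]
    · exact (hinc' _ _ h0 h).trans
        (mul_le_mul_of_nonneg_right (le_max_left _ _) (ha _ (h0.trans h)))
  have hCd : ∀ t₁ t₂ : ℝ, 0 < t₁ → t₁ ≤ t₂ → a t₂ / t₂ ^ lam ≤ Cd * (a t₁ / t₁ ^ lam) := by
    intro t₁ t₂ h0 h12
    rcases eq_or_lt_of_le h12 with rfl | h
    · have h1 : 0 ≤ a t₁ / t₁ ^ lam := div_nonneg (ha t₁ h0) (Real.rpow_pos_of_pos h0 lam).le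
      nlinarith [le_max_right Cd₀ (1:ℝ)]
    · exact (hdec' _ _ h0 h).trans
        (mul_le_mul_of_nonneg_right (le_max_left _ _)
          (div_nonneg (ha _ h0) (Real.rpow_pos_of_pos h0 lam).le))
  have haup : ∀ u v : ℝ, 0 < u → u ≤ v → a v ≤ Cd * a u * (v/u)^lam := by
    intro u v hu huv
    have hv : 0 < v := lt_of_lt_of_le hu huv
    have hul : (0:ℝ) < u ^ lam := Real.rpow_pos_of_pos hu lam
    have hvl : (0:ℝ) < v ^ lam := Real.rpow_pos_of_pos hv lam
    have h1 : a v / v ^ lam ≤ Cd * (a u / u ^ lam) := hCd u v hu huv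
    rw [mul_div_assoc', div_le_div_iff₀ hvl hul] at h1
    rw [Real.div_rpow hv.le hu.le lam, ← mul_div_assoc, le_div_iff₀ hul]
    nlinarith [h1]
  have hn0 : (0:ℝ) < n := by exact_mod_cast hn
  have hn' : (n:ℝ) ≠ 0 := hn0.ne'
  have hp0 : (0:ℝ) < p := lt_trans one_pos hp
  have hpne : p ≠ 0 := hp0.ne'
  have hp1 : p - 1 ≠ 0 := by linarith
  have hpq : p.HolderConjugate p' := hp' ▸ Real.HolderConjugate.conjExponent hp
  have hp'0 : 0 < p' := hpq.symm.pos
  have hp'1 : 1 ≤ p' := hpq.symm.lt.le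
  have hpp' : p / p' = p - 1 := by rw [hp']; field_simp
  have hinv : 1/p + 1/p' = 1 := by rw [one_div, one_div]; exact hpq.inv_add_inv_eq_one
  haveI : Nonempty (Fin n) := ⟨⟨0, hn⟩⟩
  haveI : Nontrivial (EuclideanSpace ℝ (Fin n)) := inferInstance
  set c : ℝ≥0∞ := volume (Metric.ball (0 : EuclideanSpace ℝ (Fin n)) 1) with hcdef
  have hcT : c ≠ ⊤ := measure_ball_lt_top.ne
  set θ : ℝ := (2:ℝ) ^ (lam - (n:ℝ)/p) with hθdef
  have hθ0 : 0 < θ := Real.rpow_pos_of_pos two_pos _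
  have hθ1 : θ < 1 := Real.rpow_lt_one_of_one_lt_of_neg one_lt_two (by linarith)
  set Cg : ℝ≥0∞ := (1 - ENNReal.ofReal θ)⁻¹ with hCgdef
  have hCgT : Cg ≠ ⊤ :=
    ENNReal.inv_ne_top.2 (tsub_pos_of_lt (ENNReal.ofReal_lt_one.2 hθ1)).ne'
  set K₁ : ℝ≥0∞ := ENNReal.ofReal (Ci * 4^(n:ℕ)) * c * ENNReal.ofReal (Cd * 2^lam * 2) with hK₁
  set K₂ : ℝ≥0∞ := ENNReal.ofReal (Cd * Cd * 2^lam * (4:ℝ)^(n:ℝ)) *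
      ENNReal.ofReal (Cd * 2^lam * 2) * c ^ (1/p') * Cg with hK₂
  have hK₁T : K₁ ≠ ⊤ :=
    ENNReal.mul_ne_top (ENNReal.mul_ne_top ENNReal.ofReal_ne_top hcT) ENNReal.ofReal_ne_top
  have hcpT : c ^ (1/p') ≠ ⊤ :=
    ENNReal.rpow_ne_top_of_nonneg (one_div_pos.mpr hp'0).le hcT
  have hK₂T : K₂ ≠ ⊤ :=
    ENNReal.mul_ne_top (ENNReal.mul_ne_top
      (ENNReal.mul_ne_top ENNReal.ofReal_ne_top ENNReal.ofReal_ne_top) hcpT) hCgT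
  have hKT : 2 * (K₁ + K₂) ≠ ⊤ :=
    ENNReal.mul_ne_top (by norm_num) (ENNReal.add_ne_top.2 ⟨hK₁T, hK₂T⟩)
  refine ⟨(2 * (K₁ + K₂)).toReal + 1, by positivity, ?_⟩
  intro f hf hnorm x hM0 hMT
  set ME : ℝ≥0∞ := maximalFn n f x with hMEdef
  set M : ℝ := ME.toReal with hMdef
  have hM : 0 < M := ENNReal.toReal_pos hM0.ne' hMT.ne
  have hMEeq : ENNReal.ofReal M = ME := ENNReal.ofReal_toReal hMT.ne
  set δ : ℝ := M ^ (-(p/(n:ℝ))) with hδdef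
  have hδ : 0 < δ := Real.rpow_pos_of_pos hM _
  have hδM : δ ^ (-((n:ℝ)/p)) = M := by
    rw [hδdef, ← Real.rpow_mul hM.le]
    rw [show (-(p/(n:ℝ))) * (-((n:ℝ)/p)) = 1 by field_simp]
    exact Real.rpow_one M
  have hMpδ : (M ^ p) ^ (-1/(n:ℝ)) = δ := by
    rw [hδdef, ← Real.rpow_mul hM.le]
    congr 1; ring
  set d : EuclideanSpace ℝ (Fin n) → ℝ := fun y => dist x y with hddef
  have hdmeas : Measurable d := (continuous_const.dist continuous_id).measurable
  set G : EuclideanSpace ℝ (Fin n) → ℝ≥0∞ :=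
    fun y => ENNReal.ofReal (a (dist x y) * dist x y ^ (-(n:ℝ))) * f y with hGdef
  set A : ℝ≥0∞ := ∫⁻ t in Ioc (0:ℝ) δ, ENNReal.ofReal (a t / t) with hAdef
  have hmax : ∀ ρ : ℝ, 0 < ρ → (∫⁻ y in Metric.ball x ρ, f y) ≤ ME * volume (Metric.ball x ρ) := by
    intro ρ hρ
    have hvol0 : volume (Metric.ball x ρ) ≠ 0 := (Metric.measure_ball_pos _ _ hρ).ne'
    have hvolT : volume (Metric.ball x ρ) ≠ ⊤ := measure_ball_lt_top.ne
    have hle : (volume (Metric.ball x ρ))⁻¹ * ∫⁻ y in Metric.ball x ρ, f y ≤ ME := by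
      rw [hMEdef, maximalFn]
      exact le_iSup_of_le ρ (le_iSup_of_le hρ le_rfl)
    calc (∫⁻ y in Metric.ball x ρ, f y)
        = volume (Metric.ball x ρ) *
            ((volume (Metric.ball x ρ))⁻¹ * ∫⁻ y in Metric.ball x ρ, f y) := by
          rw [← mul_assoc, ENNReal.mul_inv_cancel hvol0 hvolT, one_mul]
      _ ≤ volume (Metric.ball x ρ) * ME := mul_le_mul_right hle _
      _ = ME * volume (Metric.ball x ρ) := mul_comm _ _
  have hball : ∀ ρ : ℝ, 0 ≤ ρ →
      volume (Metric.ball x ρ) = ENNReal.ofReal (ρ^(n:ℕ)) * c := by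
    intro ρ hρ
    rw [hcdef, Measure.addHaar_ball volume x hρ, finrank_euclideanSpace_fin]
  -- near annuli
  set r : ℕ → ℝ := fun j => δ * 2 ^ (-(j:ℤ)) with hrdef
  have hr0 : ∀ j, 0 < r j := fun j => mul_pos hδ (zpow_pos two_pos _)
  have hrs : ∀ j : ℕ, r (j+1) = r j / 2 := by
    intro j
    simp only [hrdef]
    rw [eq_div_iff (two_ne_zero), mul_assoc, ← zpow_add_one₀ (two_ne_zero (α := ℝ))]
    congr 1
    push_cast
    ring
  have hrs' : ∀ j : ℕ, r (j+1) = δ * 2 ^ (-(j:ℤ) - 1) := by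
    intro j
    simp only [hrdef]
    congr 1
    push_cast
    ring
  have hranti : Antitone r := by
    intro i j hij
    exact mul_le_mul_of_nonneg_left (zpow_le_zpow_right₀ one_le_two (by omega)) hδ.le
  have hr0top : r 0 = δ := by simp [hrdef]
  have hUnear : (⋃ j : ℕ, Ioc (r (j+1)) (r j)) = Ioc 0 δ := by
    ext t
    simp only [mem_iUnion, mem_Ioc]
    constructor
    · rintro ⟨j, h1, h2⟩
      exact ⟨lt_trans (hr0 (j+1)) h1,
        h2.trans (by rw [← hr0top]; exact hranti (Nat.zero_le j))⟩
    · rintro ⟨h1, h2⟩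
      obtain ⟨j, hj1, hj2⟩ := exists_near_index hδ h1 h2
      refine ⟨j, ?_, ?_⟩
      · rw [hrs' j]; exact hj1
      · simp only [hrdef]; exact hj2
  have hNmeas : ∀ j : ℕ, MeasurableSet (d ⁻¹' (Ioc (r (j+1)) (r j))) :=
    fun j => hdmeas measurableSet_Ioc
  have hterm : ∀ j : ℕ, (∫⁻ y in d ⁻¹' (Ioc (r (j+1)) (r j)), G y)
      ≤ (ENNReal.ofReal (Ci * 4^(n:ℕ)) * c * ENNReal.ofReal M) * ENNReal.ofReal (a (r j)) := by
    intro j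
    have hκ : (0:ℝ) ≤ Ci * a (r j) * (r (j+1)) ^ (-(n:ℝ)) :=
      mul_nonneg (mul_nonneg hCi0.le (ha _ (hr0 j))) (Real.rpow_nonneg (hr0 (j+1)).le _)
    have h2r : (0:ℝ) < 2 * r j := by have := hr0 j; linarith
    calc (∫⁻ y in d ⁻¹' (Ioc (r (j+1)) (r j)), G y)
        ≤ ∫⁻ y in d ⁻¹' (Ioc (r (j+1)) (r j)),
            ENNReal.ofReal (Ci * a (r j) * (r (j+1)) ^ (-(n:ℝ))) * f y := by
          apply setLIntegral_mono' (hNmeas j)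
          intro y hy
          simp only [mem_preimage, mem_Ioc, hddef] at hy
          obtain ⟨h1, h2⟩ := hy
          have hd0 : 0 < dist x y := lt_trans (hr0 (j+1)) h1
          simp only [hGdef]
          apply mul_le_mul_left
          apply ENNReal.ofReal_le_ofReal
          calc a (dist x y) * dist x y ^ (-(n:ℝ))
              ≤ (Ci * a (r j)) * (r (j+1)) ^ (-(n:ℝ)) :=
                mul_le_mul (hCi _ _ hd0 h2)
                  (Real.rpow_le_rpow_of_nonpos (hr0 (j+1)) h1.le (neg_nonpos.2 (Nat.cast_nonneg n)))
                  (Real.rpow_nonneg dist_nonneg _)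
                  (mul_nonneg hCi0.le (ha _ (hr0 j)))
            _ = Ci * a (r j) * (r (j+1)) ^ (-(n:ℝ)) := by ring
      _ = ENNReal.ofReal (Ci * a (r j) * (r (j+1)) ^ (-(n:ℝ))) *
            ∫⁻ y in d ⁻¹' (Ioc (r (j+1)) (r j)), f y :=
          lintegral_const_mul' _ _ ENNReal.ofReal_ne_top
      _ ≤ ENNReal.ofReal (Ci * a (r j) * (r (j+1)) ^ (-(n:ℝ))) *
            ∫⁻ y in Metric.ball x (2 * r j), f y := by
          apply mul_le_mul_right
          apply lintegral_mono_set
          intro y hy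
          simp only [mem_preimage, mem_Ioc, hddef] at hy
          rw [Metric.mem_ball, dist_comm]
          exact lt_of_le_of_lt hy.2 (by nlinarith [hr0 j])
      _ ≤ ENNReal.ofReal (Ci * a (r j) * (r (j+1)) ^ (-(n:ℝ))) *
            (ME * volume (Metric.ball x (2 * r j))) :=
          mul_le_mul_right (hmax _ h2r) _
      _ = (ENNReal.ofReal (Ci * 4^(n:ℕ)) * c * ENNReal.ofReal M) * ENNReal.ofReal (a (r j)) := by
          rw [hball (2 * r j) h2r.le, ← hMEeq]
          have hre : Ci * a (r j) * (r (j+1)) ^ (-(n:ℝ)) * (2 * r j)^(n:ℕ)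
              = (Ci * 4^(n:ℕ)) * a (r j) := by
            have h4 : ((r j)/2) ^ (-(n:ℝ)) * (2 * r j)^(n:ℕ) = 4^(n:ℕ) := by
              rw [Real.rpow_neg (by positivity), Real.rpow_natCast, inv_mul_eq_div, ← div_pow]
              congr 1
              have hrne : r j ≠ 0 := (hr0 j).ne'
              field_simp
              ring
            rw [hrs j]
            linear_combination (Ci * a (r j)) * h4
          calc ENNReal.ofReal (Ci * a (r j) * (r (j+1)) ^ (-(n:ℝ))) *
                (ENNReal.ofReal M * (ENNReal.ofReal ((2 * r j)^(n:ℕ)) * c))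
              = (ENNReal.ofReal (Ci * a (r j) * (r (j+1)) ^ (-(n:ℝ))) *
                  ENNReal.ofReal ((2 * r j)^(n:ℕ))) * (ENNReal.ofReal M * c) := by ring
            _ = ENNReal.ofReal ((Ci * 4^(n:ℕ)) * a (r j)) * (ENNReal.ofReal M * c) := by
                rw [← ENNReal.ofReal_mul hκ, hre]
            _ = (ENNReal.ofReal (Ci * 4^(n:ℕ)) * c * ENNReal.ofReal M) *
                  ENNReal.ofReal (a (r j)) := by
                rw [ENNReal.ofReal_mul (by positivity)]
                ring
  have hsumA : ∑' j : ℕ, ENNReal.ofReal (a (r j)) ≤ ENNReal.ofReal (Cd * 2^lam * 2) * A := by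
    calc ∑' j : ℕ, ENNReal.ofReal (a (r j))
        ≤ ∑' j : ℕ, ENNReal.ofReal (Cd * 2^lam * 2) *
            ∫⁻ t in Ioc (r (j+1)) (r j), ENNReal.ofReal (a t / t) := by
          apply ENNReal.tsum_le_tsum
          intro j
          have hk := key_lower a lam Cd hlam0 hCd0 ha hCd (hr0 j)
          rwa [← hrs j] at hk
      _ = ENNReal.ofReal (Cd * 2^lam * 2) *
            ∑' j : ℕ, ∫⁻ t in Ioc (r (j+1)) (r j), ENNReal.ofReal (a t / t) :=
          ENNReal.tsum_mul_left
      _ = ENNReal.ofReal (Cd * 2^lam * 2) * A := by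
          rw [hAdef, ← hUnear, lintegral_iUnion (fun j => measurableSet_Ioc)
            (pairwise_disjoint_Ioc_antitone hranti)]
  have hnear : (∫⁻ y in d ⁻¹' (Ioc 0 δ), G y) ≤ K₁ * (ENNReal.ofReal M * A) := by
    have hNsplit : d ⁻¹' (Ioc 0 δ) = ⋃ j : ℕ, d ⁻¹' (Ioc (r (j+1)) (r j)) := by
      rw [← preimage_iUnion, hUnear]
    rw [hNsplit, lintegral_iUnion hNmeas
      (fun i j hij => Disjoint.preimage d (pairwise_disjoint_Ioc_antitone hranti hij))]
    calc ∑' j : ℕ, (∫⁻ y in d ⁻¹' (Ioc (r (j+1)) (r j)), G y)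
        ≤ ∑' j : ℕ, (ENNReal.ofReal (Ci * 4^(n:ℕ)) * c * ENNReal.ofReal M) *
            ENNReal.ofReal (a (r j)) := ENNReal.tsum_le_tsum hterm
      _ = (ENNReal.ofReal (Ci * 4^(n:ℕ)) * c * ENNReal.ofReal M) *
            ∑' j : ℕ, ENNReal.ofReal (a (r j)) := ENNReal.tsum_mul_left
      _ ≤ (ENNReal.ofReal (Ci * 4^(n:ℕ)) * c * ENNReal.ofReal M) *
            (ENNReal.ofReal (Cd * 2^lam * 2) * A) := mul_le_mul_right hsumA _
      _ = K₁ * (ENNReal.ofReal M * A) := by rw [hK₁]; ring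
  -- far annuli
  set R : ℕ → ℝ := fun j => δ * 2 ^ (j:ℤ) with hRdef
  have hR0 : ∀ j, 0 < R j := fun j => mul_pos hδ (zpow_pos two_pos _)
  have hRs' : ∀ j : ℕ, R (j+1) = δ * 2 ^ ((j:ℤ) + 1) := by
    intro j
    simp only [hRdef]
    congr 1
  have hRs : ∀ j : ℕ, R (j+1) = 2 * R j := by
    intro j
    rw [hRs' j]
    simp only [hRdef]
    rw [zpow_add_one₀ (two_ne_zero (α := ℝ))]
    ring
  have hRmono : Monotone R := by
    intro i j hij
    exact mul_le_mul_of_nonneg_left (zpow_le_zpow_right₀ one_le_two (by omega)) hδ.le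
  have hR0top : R 0 = δ := by simp [hRdef]
  have hRδ : ∀ j, δ ≤ R j := fun j => by
    rw [← hR0top]; exact hRmono (Nat.zero_le j)
  have hRj : ∀ j : ℕ, R j = δ * 2^(j:ℕ) := by
    intro j; simp only [hRdef]; rw [zpow_natCast]
  have hUfar : (⋃ j : ℕ, Ioc (R j) (R (j+1))) = Ioi δ := by
    ext t
    simp only [mem_iUnion, mem_Ioc, mem_Ioi]
    constructor
    · rintro ⟨j, h1, _⟩
      exact lt_of_le_of_lt (hRδ j) h1
    · intro h
      obtain ⟨j, hj1, hj2⟩ := exists_far_index hδ h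
      refine ⟨j, ?_, ?_⟩
      · simp only [hRdef]; exact hj1
      · rw [hRs' j]; exact hj2
  have hswap : ∀ (e : ℝ) (j : ℕ), ((2:ℝ)^(j:ℕ))^e = ((2:ℝ)^e)^(j:ℕ) := by
    intro e j
    rw [← Real.rpow_natCast (2:ℝ) j, ← Real.rpow_mul (by norm_num), mul_comm,
      Real.rpow_mul (by norm_num), Real.rpow_natCast]
  have hfarterm : ∀ j : ℕ, (∫⁻ y in d ⁻¹' (Ioc (R j) (R (j+1))), G y)
      ≤ (ENNReal.ofReal (Cd * Cd * 2^lam * (4:ℝ)^(n:ℝ)) * ENNReal.ofReal (a δ) *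
          ENNReal.ofReal M * c ^ (1/p')) * (ENNReal.ofReal θ) ^ j := by
    intro j
    have h2lam : (0:ℝ) < (2:ℝ)^lam := Real.rpow_pos_of_pos two_pos _
    have hκ : (0:ℝ) ≤ Cd * 2^lam * a (R j) * (R j) ^ (-(n:ℝ)) :=
      mul_nonneg (mul_nonneg (mul_nonneg hCd0.le h2lam.le) (ha _ (hR0 j)))
        (Real.rpow_nonneg (hR0 j).le _)
    have h4R : (0:ℝ) < 4 * R j := by have := hR0 j; linarith
    have hsubball : d ⁻¹' (Ioc (R j) (R (j+1))) ⊆ Metric.ball x (4 * R j) := by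
      intro y hy
      simp only [mem_preimage, mem_Ioc, hddef] at hy
      rw [Metric.mem_ball, dist_comm]
      calc dist x y ≤ R (j+1) := hy.2
        _ < 4 * R j := by rw [hRs j]; linarith [hR0 j]
    have hbig : Cd * 2^lam * a (R j) * (R j)^(-(n:ℝ)) * (((4 * R j)^(n:ℕ))^(1/p'))
        ≤ (Cd * Cd * 2^lam * (4:ℝ)^(n:ℝ)) * a δ * (M * θ^(j:ℕ)) := by
      set s : ℝ := R j with hsdef
      have hs0 : 0 < s := hR0 j
      have step1 : ((4*s)^(n:ℕ):ℝ)^(1/p') = (4*s)^((n:ℝ)*(1/p')) := by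
        rw [← Real.rpow_natCast (4*s) n, ← Real.rpow_mul (by positivity)]
      have step2 : ((4:ℝ)*s)^((n:ℝ)*(1/p')) = (4:ℝ)^((n:ℝ)*(1/p')) * s^((n:ℝ)*(1/p')) :=
        Real.mul_rpow (by norm_num) hs0.le
      have hp'inv : 1/p' ≤ 1 := by
        rw [div_le_one hp'0]; exact hp'1
      have step3 : (4:ℝ)^((n:ℝ)*(1/p')) ≤ (4:ℝ)^(n:ℝ) := by
        apply Real.rpow_le_rpow_of_exponent_le (by norm_num)
        calc (n:ℝ)*(1/p') ≤ (n:ℝ)*1 := mul_le_mul_of_nonneg_left hp'inv hn0.le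
          _ = (n:ℝ) := mul_one _
      have step4 : s^(-(n:ℝ)) * s^((n:ℝ)*(1/p')) = s^(-((n:ℝ)/p)) := by
        rw [← Real.rpow_add hs0]
        congr 1
        linear_combination (n:ℝ) * hinv
      have step5 : s^(-((n:ℝ)/p)) = M * ((2:ℝ)^(-((n:ℝ)/p)))^(j:ℕ) := by
        rw [hsdef, hRj j, Real.mul_rpow hδ.le (by positivity), hδM]
        rw [hswap]
      have step6 : a s ≤ Cd * a δ * ((2:ℝ)^lam)^(j:ℕ) := by
        have h6 := haup δ s hδ (hRδ j)
        have hsδ : s/δ = 2^(j:ℕ) := by rw [hsdef, hRj j]; field_simp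
        rw [hsδ, hswap] at h6
        exact h6
      have step7 : (2:ℝ)^lam * (2:ℝ)^(-((n:ℝ)/p)) = θ := by
        rw [hθdef, ← Real.rpow_add two_pos]
        congr 1
      calc Cd * 2^lam * a s * s^(-(n:ℝ)) * (((4*s)^(n:ℕ))^(1/p'))
          = (Cd * 2^lam) * a s * ((4:ℝ)^((n:ℝ)*(1/p')) * (s^(-(n:ℝ)) * s^((n:ℝ)*(1/p')))) := by
            rw [step1, step2]; ring
        _ = (Cd * 2^lam) * a s * ((4:ℝ)^((n:ℝ)*(1/p')) * s^(-((n:ℝ)/p))) := by rw [step4]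
        _ ≤ (Cd * 2^lam) * (Cd * a δ * ((2:ℝ)^lam)^(j:ℕ)) * ((4:ℝ)^(n:ℝ) * s^(-((n:ℝ)/p))) := by
            apply mul_le_mul
            · exact mul_le_mul le_rfl step6 (ha s hs0) (by positivity)
            · apply mul_le_mul step3 le_rfl (Real.rpow_nonneg hs0.le _) (by positivity)
            · exact mul_nonneg (Real.rpow_nonneg (by norm_num) _) (Real.rpow_nonneg hs0.le _)
            · have haδ : 0 ≤ a δ := ha δ hδ
              positivity
        _ = (Cd * Cd * 2^lam * (4:ℝ)^(n:ℝ)) * a δ * (((2:ℝ)^lam)^(j:ℕ) * s^(-((n:ℝ)/p))) := by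
            ring
        _ = (Cd * Cd * 2^lam * (4:ℝ)^(n:ℝ)) * a δ * (M * θ^(j:ℕ)) := by
            rw [step5, ← step7, mul_pow]
            ring
    calc (∫⁻ y in d ⁻¹' (Ioc (R j) (R (j+1))), G y)
        ≤ ∫⁻ y in d ⁻¹' (Ioc (R j) (R (j+1))),
            ENNReal.ofReal (Cd * 2^lam * a (R j) * (R j) ^ (-(n:ℝ))) * f y := by
          apply setLIntegral_mono' (hdmeas measurableSet_Ioc)
          intro y hy
          simp only [mem_preimage, mem_Ioc, hddef] at hy
          obtain ⟨h1, h2⟩ := hy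
          have hd0 : 0 < dist x y := lt_trans (hR0 j) h1
          simp only [hGdef]
          apply mul_le_mul_left
          apply ENNReal.ofReal_le_ofReal
          have e1 : a (dist x y) ≤ Cd * a (R j) * 2^lam := by
            have h6 := haup (R j) (dist x y) (hR0 j) h1.le
            have h2l : (dist x y / R j)^lam ≤ 2^lam := by
              apply Real.rpow_le_rpow (by positivity) _ hlam0.le
              rw [div_le_iff₀ (hR0 j)]
              rw [hRs j] at h2
              linarith
            nlinarith [mul_nonneg hCd0.le (ha (R j) (hR0 j))]
          have e2 : dist x y ^ (-(n:ℝ)) ≤ (R j) ^ (-(n:ℝ)) :=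
            Real.rpow_le_rpow_of_nonpos (hR0 j) h1.le (neg_nonpos.2 (Nat.cast_nonneg n))
          calc a (dist x y) * dist x y ^ (-(n:ℝ))
              ≤ (Cd * a (R j) * 2^lam) * ((R j) ^ (-(n:ℝ))) :=
                mul_le_mul e1 e2 (Real.rpow_nonneg dist_nonneg _)
                  (mul_nonneg (mul_nonneg hCd0.le (ha _ (hR0 j))) h2lam.le)
            _ = Cd * 2^lam * a (R j) * (R j) ^ (-(n:ℝ)) := by ring
      _ = ENNReal.ofReal (Cd * 2^lam * a (R j) * (R j) ^ (-(n:ℝ))) *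
            ∫⁻ y in d ⁻¹' (Ioc (R j) (R (j+1))), f y :=
          lintegral_const_mul' _ _ ENNReal.ofReal_ne_top
      _ ≤ ENNReal.ofReal (Cd * 2^lam * a (R j) * (R j) ^ (-(n:ℝ))) *
            (volume (d ⁻¹' (Ioc (R j) (R (j+1))))) ^ (1/p') :=
          mul_le_mul_right (holder_bound volume hpq hf hnorm _) _
      _ ≤ ENNReal.ofReal (Cd * 2^lam * a (R j) * (R j) ^ (-(n:ℝ))) *
            (ENNReal.ofReal ((4 * R j)^(n:ℕ)) * c) ^ (1/p') := by
          apply mul_le_mul_right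
          apply ENNReal.rpow_le_rpow _ (one_div_pos.mpr hp'0).le
          rw [← hball (4 * R j) h4R.le]
          exact measure_mono hsubball
      _ = ENNReal.ofReal (Cd * 2^lam * a (R j) * (R j) ^ (-(n:ℝ)) *
            (((4 * R j)^(n:ℕ))^(1/p'))) * c ^ (1/p') := by
          rw [ENNReal.mul_rpow_of_nonneg _ _ (one_div_pos.mpr hp'0).le,
            ENNReal.ofReal_rpow_of_nonneg (by positivity) (one_div_pos.mpr hp'0).le,
            ← mul_assoc, ← ENNReal.ofReal_mul hκ]
      _ ≤ ENNReal.ofReal ((Cd * Cd * 2^lam * (4:ℝ)^(n:ℝ)) * a δ * (M * θ^(j:ℕ))) * c ^ (1/p') :=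
          mul_le_mul_left (ENNReal.ofReal_le_ofReal hbig) _
      _ = (ENNReal.ofReal (Cd * Cd * 2^lam * (4:ℝ)^(n:ℝ)) * ENNReal.ofReal (a δ) *
            ENNReal.ofReal M * c ^ (1/p')) * (ENNReal.ofReal θ) ^ j := by
          rw [ENNReal.ofReal_mul (mul_nonneg (by positivity) (ha δ hδ)),
            ENNReal.ofReal_mul (by positivity : (0:ℝ) ≤ Cd * Cd * 2^lam * (4:ℝ)^(n:ℝ)),
            ENNReal.ofReal_mul hM.le, ENNReal.ofReal_pow hθ0.le]
          ring
  have hfar : (∫⁻ y in d ⁻¹' (Ioi δ), G y) ≤ K₂ * (ENNReal.ofReal M * A) := by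
    have hFsplit : d ⁻¹' (Ioi δ) = ⋃ j : ℕ, d ⁻¹' (Ioc (R j) (R (j+1))) := by
      rw [← preimage_iUnion, hUfar]
    rw [hFsplit, lintegral_iUnion (fun j => hdmeas measurableSet_Ioc)
      (fun i j hij => Disjoint.preimage d (pairwise_disjoint_Ioc_monotone hRmono hij))]
    have hAδ : ENNReal.ofReal (a δ) ≤ ENNReal.ofReal (Cd * 2^lam * 2) * A := by
      refine (key_lower a lam Cd hlam0 hCd0 ha hCd hδ).trans ?_
      exact mul_le_mul_right (lintegral_mono_set (Ioc_subset_Ioc (by positivity) le_rfl)) _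
    calc ∑' j : ℕ, (∫⁻ y in d ⁻¹' (Ioc (R j) (R (j+1))), G y)
        ≤ ∑' j : ℕ, (ENNReal.ofReal (Cd * Cd * 2^lam * (4:ℝ)^(n:ℝ)) * ENNReal.ofReal (a δ) *
            ENNReal.ofReal M * c ^ (1/p')) * (ENNReal.ofReal θ) ^ j :=
          ENNReal.tsum_le_tsum hfarterm
      _ = (ENNReal.ofReal (Cd * Cd * 2^lam * (4:ℝ)^(n:ℝ)) * ENNReal.ofReal (a δ) *
            ENNReal.ofReal M * c ^ (1/p')) * ∑' j : ℕ, (ENNReal.ofReal θ) ^ j :=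
          ENNReal.tsum_mul_left
      _ = (ENNReal.ofReal (Cd * Cd * 2^lam * (4:ℝ)^(n:ℝ)) * ENNReal.ofReal (a δ) *
            ENNReal.ofReal M * c ^ (1/p')) * Cg := by
          rw [ENNReal.tsum_geometric, hCgdef]
      _ ≤ (ENNReal.ofReal (Cd * Cd * 2^lam * (4:ℝ)^(n:ℝ)) *
            (ENNReal.ofReal (Cd * 2^lam * 2) * A) *
            ENNReal.ofReal M * c ^ (1/p')) * Cg := by
          gcongr
      _ = K₂ * (ENNReal.ofReal M * A) := by rw [hK₂]; ring
  -- splitting of the full integral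
  have hGx : G x = 0 := by
    simp only [hGdef, dist_self]
    rw [Real.zero_rpow (neg_ne_zero.2 hn'), mul_zero, ENNReal.ofReal_zero, zero_mul]
  have hsplit : (∫⁻ y, G y) = (∫⁻ y in d ⁻¹' (Ioc 0 δ), G y) + ∫⁻ y in d ⁻¹' (Ioi δ), G y := by
    have h1 : (∫⁻ y in d ⁻¹' (Iic δ), G y) + (∫⁻ y in (d ⁻¹' (Iic δ))ᶜ, G y) = ∫⁻ y, G y :=
      lintegral_add_compl G (hdmeas measurableSet_Iic)
    have h2 : (d ⁻¹' (Iic δ))ᶜ = d ⁻¹' (Ioi δ) := by rw [← preimage_compl, compl_Iic]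
    have h3 : d ⁻¹' (Iic δ) = d ⁻¹' (Iic 0) ∪ d ⁻¹' (Ioc 0 δ) := by
      rw [← preimage_union, Iic_union_Ioc_eq_Iic hδ.le]
    have h4 : d ⁻¹' (Iic 0) = {x} := by
      ext y
      simp only [mem_preimage, mem_Iic, mem_singleton_iff, hddef]
      constructor
      · intro h
        exact (dist_eq_zero.1 (le_antisymm h dist_nonneg)).symm
      · rintro rfl
        simp [dist_self]
    have h5 : (∫⁻ y in d ⁻¹' (Iic δ), G y) = ∫⁻ y in d ⁻¹' (Ioc 0 δ), G y := by
      rw [h3, lintegral_union (hdmeas measurableSet_Ioc) ((Iic_disjoint_Ioc le_rfl).preimage d),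
        h4, lintegral_singleton, hGx, zero_mul, zero_add]
    rw [← h1, h2, h5]
  -- lower bound for the right-hand side
  have hMp0 : 0 < M ^ p := Real.rpow_pos_of_pos hM p
  have hRHS : ENNReal.ofReal M * A ≤ 2 * ∫⁻ t in Ioo (0:ℝ) (M ^ p),
      (∫⁻ s in Ioc (0:ℝ) (t ^ (-1/(n:ℝ))), ENNReal.ofReal (a s / s)) *
        ENNReal.ofReal (t ^ (-1/p')) := by
    have hss : Ioo (M^p/2) (M^p) ⊆ Ioo (0:ℝ) (M^p) :=
      Ioo_subset_Ioo (by positivity) le_rfl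
    have hlow : ∀ t ∈ Ioo (M^p/2) (M^p),
        A * ENNReal.ofReal (M ^ (-(p/p'))) ≤
        (∫⁻ s in Ioc (0:ℝ) (t ^ (-1/(n:ℝ))), ENNReal.ofReal (a s / s)) *
          ENNReal.ofReal (t ^ (-1/p')) := by
      intro t ht
      have ht0 : 0 < t := lt_trans (by positivity) ht.1
      apply mul_le_mul'
      · rw [hAdef]
        apply lintegral_mono_set
        apply Ioc_subset_Ioc le_rfl
        rw [← hMpδ]
        exact Real.rpow_le_rpow_of_nonpos ht0 ht.2.le
          (div_nonpos_of_nonpos_of_nonneg (by norm_num) hn0.le)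
      · apply ENNReal.ofReal_le_ofReal
        calc M ^ (-(p/p')) = (M^p) ^ ((-1:ℝ)/p') := by
              rw [← Real.rpow_mul hM.le]
              congr 1
              ring
          _ ≤ t ^ (-1/p') := Real.rpow_le_rpow_of_nonpos ht0 ht.2.le
              (div_nonpos_of_nonpos_of_nonneg (by norm_num) hp'0.le)
    have hsum : M ^ (-(p/p')) * M ^ p = M := by
      rw [← Real.rpow_add hM, show (-(p/p') + p) = 1 by rw [hpp']; ring, Real.rpow_one]
    have hMhalf : ENNReal.ofReal M = 2 * (ENNReal.ofReal (M ^ (-(p/p'))) *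
        ENNReal.ofReal (M^p - M^p/2)) := by
      rw [← ENNReal.ofReal_mul (Real.rpow_nonneg hM.le _),
        show (2:ℝ≥0∞) = ENNReal.ofReal 2 by rw [ENNReal.ofReal_ofNat],
        ← ENNReal.ofReal_mul (by norm_num)]
      congr 1
      linear_combination -hsum
    calc ENNReal.ofReal M * A
        = 2 * ((A * ENNReal.ofReal (M ^ (-(p/p')))) * ENNReal.ofReal (M^p - M^p/2)) := by
          rw [hMhalf]; ring
      _ = 2 * ((A * ENNReal.ofReal (M ^ (-(p/p')))) * volume (Ioo (M^p/2) (M^p))) := by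
          rw [Real.volume_Ioo]
      _ = 2 * ∫⁻ _ in Ioo (M^p/2) (M^p), A * ENNReal.ofReal (M ^ (-(p/p'))) := by
          rw [setLIntegral_const]
      _ ≤ 2 * ∫⁻ t in Ioo (M^p/2) (M^p),
            (∫⁻ s in Ioc (0:ℝ) (t ^ (-1/(n:ℝ))), ENNReal.ofReal (a s / s)) *
              ENNReal.ofReal (t ^ (-1/p')) :=
          mul_le_mul_right (setLIntegral_mono' measurableSet_Ioo hlow) _
      _ ≤ 2 * ∫⁻ t in Ioo (0:ℝ) (M^p),
            (∫⁻ s in Ioc (0:ℝ) (t ^ (-1/(n:ℝ))), ENNReal.ofReal (a s / s)) *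
              ENNReal.ofReal (t ^ (-1/p')) :=
          mul_le_mul_right (lintegral_mono_set hss) _
  -- final assembly
  calc (∫⁻ y, ENNReal.ofReal (a (dist x y) * dist x y ^ (-(n:ℝ))) * f y)
      = (∫⁻ y in d ⁻¹' (Ioc 0 δ), G y) + ∫⁻ y in d ⁻¹' (Ioi δ), G y := hsplit
    _ ≤ K₁ * (ENNReal.ofReal M * A) + K₂ * (ENNReal.ofReal M * A) := add_le_add hnear hfar
    _ = (K₁ + K₂) * (ENNReal.ofReal M * A) := (add_mul _ _ _).symm
    _ ≤ (K₁ + K₂) * (2 * ∫⁻ t in Ioo (0:ℝ) (M ^ p),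
          (∫⁻ s in Ioc (0:ℝ) (t ^ (-1/(n:ℝ))), ENNReal.ofReal (a s / s)) *
            ENNReal.ofReal (t ^ (-1/p'))) := mul_le_mul_right hRHS _
    _ = (2 * (K₁ + K₂)) * ∫⁻ t in Ioo (0:ℝ) (M ^ p),
          (∫⁻ s in Ioc (0:ℝ) (t ^ (-1/(n:ℝ))), ENNReal.ofReal (a s / s)) *
            ENNReal.ofReal (t ^ (-1/p')) := by ring
    _ ≤ ENNReal.ofReal ((2 * (K₁ + K₂)).toReal + 1) *
          ∫⁻ t in Ioo (0:ℝ) (M ^ p),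
            (∫⁻ s in Ioc (0:ℝ) (t ^ (-1/(n:ℝ))), ENNReal.ofReal (a s / s)) *
              ENNReal.ofReal (t ^ (-1/p')) := by
        apply mul_le_mul_left
        calc 2 * (K₁ + K₂) = ENNReal.ofReal ((2 * (K₁ + K₂)).toReal) :=
              (ENNReal.ofReal_toReal hKT).symm
          _ ≤ ENNReal.ofReal ((2 * (K₁ + K₂)).toReal + 1) :=
              ENNReal.ofReal_le_ofReal (by linarith)
end
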